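/- arXiv:2311.10204 — 8 statements merged into one kernel-verified Lean document; each statement's English description precedes it below -/
import Mathlib

section
/- Let G=(V,E) be a directed graph with node coloring c:V→{1,…,C}, let B:=⌈log₂ C⌉, and for a color γ∈{1,…,C} and 1≤i≤B let bin(γ,i)∈{0,1} denote the i-th bit of the B-bit binary representation of γ. Define the directed graph G'=(V',E') with V':=V×{1,…,B}, edges ((u,B),(v,1))∈E' for every (u,v)∈E, and path edges ((v,i),(v,i+1))∈E' for every v∈V and 1≤i<B; define the node coloring c':V'→{1,2} by c'((v,i)):=bin(c(v),i)+1. Then for all s,t∈V, every ℓ≥1 and all colors c₁,…,c_ℓ∈{1,…,C}: there is a walk of length ℓ from s to t in G with node color sequence c₁,…,c_ℓ if and only if there is a walk of length ℓ·B from (s,B) to (t,B) in G' with node color sequence c'₁,…,c'_{ℓB}, where c'_{(j−1)B+i}:=bin(c_j,i)+1 for all 1≤j≤ℓ and 1≤i≤B. -/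
/-- `NodeColoredWalk E c s t cs` : there is a walk `s = v₀, v₁, …, v_ℓ = t` in the
directed graph with edge relation `E` whose node color sequence
`c v₁, c v₂, …, c v_ℓ` equals `cs`. -/
inductive NodeColoredWalk {V σ : Type*} (E : V → V → Prop) (c : V → σ) :
    V → V → List σ → Prop
  | nil (v : V) : NodeColoredWalk E c v v []
  | cons {u v w : V} {a : σ} {cs : List σ} (he : E u v) (hc : c v = a)
      (hw : NodeColoredWalk E c v w cs) : NodeColoredWalk E c u w (a :: cs)

theorem ncw_append {V σ : Type*} {E : V → V → Prop} {c : V → σ} {u v w : V}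
    {l1 l2 : List σ} (h1 : NodeColoredWalk E c u v l1)
    (h2 : NodeColoredWalk E c v w l2) : NodeColoredWalk E c u w (l1 ++ l2) := by
  induction h1 with
  | nil => simpa
  | cons he hc _ ih => exact .cons he hc (ih h2)

def Ebin {V : Type*} (E : V → V → Prop) (B : ℕ) : V × ℕ → V × ℕ → Prop := fun p q =>
  (p.2 = B ∧ q.2 = 1 ∧ E p.1 q.1) ∨ (p.1 = q.1 ∧ q.2 = p.2 + 1 ∧ 1 ≤ p.2 ∧ p.2 < B)

def cbin {V : Type*} (c : V → ℕ) : V × ℕ → ℕ :=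
  fun p => (Nat.testBit (c p.1) (p.2 - 1)).toNat + 1

theorem climb_build {V : Type*} (E : V → V → Prop) (B : ℕ) (c : V → ℕ) :
    ∀ (k i : ℕ) (v : V), i + k = B → 1 ≤ i →
    NodeColoredWalk (Ebin E B) (cbin c) (v, i) (v, B)
      ((List.range k).map fun j => (Nat.testBit (c v) (i + j)).toNat + 1) := by
  intro k
  induction k with
  | zero =>
    intro i v h _
    obtain rfl : i = B := by omega
    simp only [List.range_zero, List.map_nil]
    exact .nil _
  | succ k ih =>
    intro i v h hi
    have hstep : Ebin E B (v, i) (v, i + 1) := Or.inr ⟨rfl, rfl, hi, by omega⟩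
    have hcol : cbin c (v, i + 1) = (Nat.testBit (c v) (i + 0)).toNat + 1 := by
      simp [cbin]
    have hlist : ((List.range (k + 1)).map fun j => (Nat.testBit (c v) (i + j)).toNat + 1)
        = ((Nat.testBit (c v) (i + 0)).toNat + 1) ::
          ((List.range k).map fun j => (Nat.testBit (c v) ((i + 1) + j)).toNat + 1) := by
      rw [List.range_succ_eq_map]
      simp [List.map_map, Function.comp, Nat.add_comm, Nat.add_assoc, Nat.add_left_comm]
    rw [hlist]
    exact .cons hstep hcol (ih (i + 1) v (by omega) (by omega))

theorem climb_inv {V : Type*} (E : V → V → Prop) (B : ℕ) (c : V → ℕ) (γ : ℕ) (t : V) :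
    ∀ (k i : ℕ) (v : V) (L : List ℕ), i + k = B → 1 ≤ i →
    NodeColoredWalk (Ebin E B) (cbin c) (v, i) (t, B)
      (((List.range k).map fun j => (Nat.testBit γ (i + j)).toNat + 1) ++ L) →
    (∀ j < k, Nat.testBit (c v) (i + j) = Nat.testBit γ (i + j)) ∧
      NodeColoredWalk (Ebin E B) (cbin c) (v, B) (t, B) L := by
  intro k
  induction k with
  | zero =>
    intro i v L h _ hw
    obtain rfl : i = B := by omega
    refine ⟨fun j hj => absurd hj (by omega), ?_⟩
    simpa using hw
  | succ k ih =>
    intro i v L h hi hw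
    have hlist : ((List.range (k + 1)).map fun j => (Nat.testBit γ (i + j)).toNat + 1)
        = ((Nat.testBit γ (i + 0)).toNat + 1) ::
          ((List.range k).map fun j => (Nat.testBit γ ((i + 1) + j)).toNat + 1) := by
      rw [List.range_succ_eq_map]
      simp [List.map_map, Function.comp, Nat.add_comm, Nat.add_assoc, Nat.add_left_comm]
    rw [hlist, List.cons_append] at hw
    cases hw with
    | cons he hcq hw' =>
      rename_i q
      obtain ⟨q1, q2⟩ := q
      rcases he with ⟨hB, -, -⟩ | ⟨hq1, hq2, -, -⟩
      · exact absurd hB (by simp; omega)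
      · simp only at hq1 hq2
        subst hq1; subst hq2
        have hbit : Nat.testBit (c v) i = Nat.testBit γ (i + 0) := by
          simp only [cbin, Nat.add_sub_cancel] at hcq
          cases h1 : Nat.testBit (c v) i <;> cases h2 : Nat.testBit γ (i + 0) <;>
            simp_all
        obtain ⟨hbits, hwB⟩ := ih (i + 1) v L (by omega) (by omega) hw'
        refine ⟨?_, hwB⟩
        intro j hj
        rcases j with _ | j'
        · simpa using hbit
        · have := hbits j' (by omega)
          have he : i + (j' + 1) = (i + 1) + j' := by omega
          rw [he]; exact this

theorem eq_of_low_bits {B x y : ℕ} (hx1 : 1 ≤ x) (hx2 : x ≤ 2 ^ B) (hy1 : 1 ≤ y)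
    (hy2 : y ≤ 2 ^ B) (h : ∀ j < B, x.testBit j = y.testBit j) : x = y := by
  have h1 : x % 2 ^ B = y % 2 ^ B := Nat.eq_of_testBit_eq fun i => by
    simp only [Nat.testBit_mod_two_pow]
    by_cases hi : i < B
    · simp [hi, h i hi]
    · simp [hi]
  rcases Nat.lt_or_ge x (2 ^ B) with hx | hx
  · rw [Nat.mod_eq_of_lt hx] at h1
    rcases Nat.lt_or_ge y (2 ^ B) with hy | hy
    · rw [Nat.mod_eq_of_lt hy] at h1; exact h1
    · have hy' : y = 2 ^ B := le_antisymm hy2 hy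
      subst hy'; simp at h1; omega
  · have hx' : x = 2 ^ B := le_antisymm hx2 hx
    subst hx'; simp at h1
    rcases Nat.lt_or_ge y (2 ^ B) with hy | hy
    · rw [Nat.mod_eq_of_lt hy] at h1; omega
    · have hy' : y = 2 ^ B := le_antisymm hy2 hy
      omega

/-- Let `G = (V, E)` be a directed graph node-colored by
`c : V → {1, …, C}`, let `B := ⌈log₂ C⌉` (`Nat.clog 2 C`), and let `bin γ i` be the
`i`-th bit of the `B`-bit binary representation of `γ` (`(γ.testBit (i-1)).toNat`,
bit `1` being the least significant). Form the graph `G'` on `V × {1, …, B}`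
(modeled inside `V × ℕ`) with edges `((u,B), (v,1))` for `(u,v) ∈ E` and path edges
`((v,i), (v,i+1))` for `1 ≤ i < B`, node-colored by `c' (v,i) := bin (c v) i + 1`.
Then there is a walk of length `ℓ` from `s` to `t` in `G` with node color sequence
`c₁, …, c_ℓ` iff there is a walk of length `ℓ·B` from `(s,B)` to `(t,B)` in `G'`
with node color sequence `c'_{(j-1)B+i} := bin c_j i + 1`. -/
theorem binary_color_reduction {V : Type*} (E : V → V → Prop) (C : ℕ) (hC : 2 ≤ C)
    (c : V → ℕ) (hc : ∀ v, 1 ≤ c v ∧ c v ≤ C)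
    (s t : V) (cs : List ℕ) (hcs : ∀ γ ∈ cs, 1 ≤ γ ∧ γ ≤ C) (hne : cs ≠ []) :
    NodeColoredWalk E c s t cs ↔
      NodeColoredWalk
        (fun p q : V × ℕ =>
          (p.2 = Nat.clog 2 C ∧ q.2 = 1 ∧ E p.1 q.1) ∨
          (p.1 = q.1 ∧ q.2 = p.2 + 1 ∧ 1 ≤ p.2 ∧ p.2 < Nat.clog 2 C))
        (fun p : V × ℕ => (Nat.testBit (c p.1) (p.2 - 1)).toNat + 1)
        (s, Nat.clog 2 C) (t, Nat.clog 2 C)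
        (cs.flatMap fun γ =>
          (List.range (Nat.clog 2 C)).map fun i => (Nat.testBit γ i).toNat + 1) := by
  set B := Nat.clog 2 C with hBdef
  have hB : 1 ≤ B := Nat.clog_pos (by norm_num) (by omega)
  have hpow : C ≤ 2 ^ B := Nat.le_pow_clog (by norm_num) C
  show NodeColoredWalk E c s t cs ↔
    NodeColoredWalk (Ebin E B) (cbin c) (s, B) (t, B)
      (cs.flatMap fun γ => (List.range B).map fun i => (Nat.testBit γ i).toNat + 1)
  clear hne
  revert hcs
  induction cs generalizing s with
  | nil =>
    intro _
    simp only [List.flatMap_nil]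
    constructor
    · intro h
      cases h
      exact .nil _
    · intro h
      cases h
      exact .nil _
  | cons γ rest ih =>
    intro hcs
    have hγ := hcs γ (by simp)
    have hrest : ∀ γ' ∈ rest, 1 ≤ γ' ∧ γ' ≤ C := fun γ' h => hcs γ' (by simp [h])
    simp only [List.flatMap_cons]
    have hL : ∀ δ : ℕ, ((List.range B).map fun i => (Nat.testBit δ i).toNat + 1)
        = ((Nat.testBit δ 0).toNat + 1) ::
          ((List.range (B - 1)).map fun j => (Nat.testBit δ (1 + j)).toNat + 1) := by
      intro δ
      conv_lhs => rw [show B = (B - 1) + 1 by omega]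
      rw [List.range_succ_eq_map]
      simp [List.map_map, Function.comp, Nat.add_comm]
    constructor
    · intro h
      cases h with
      | cons he hcv hw =>
        rename_i v
        rw [hL, List.cons_append]
        have hseg := climb_build E B c (B - 1) 1 v (by omega) le_rfl
        rw [hcv] at hseg
        refine .cons (Or.inl ⟨rfl, rfl, he⟩) ?_ (ncw_append hseg ((ih v hrest).mp hw))
        simp [cbin, hcv]
    · intro h
      rw [hL, List.cons_append] at h
      cases h with
      | cons he hcq hw =>
        rename_i q
        obtain ⟨q1, q2⟩ := q
        rcases he with ⟨-, hq2, hE⟩ | ⟨-, -, -, hlt⟩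
        · simp only at hq2 hE
          subst hq2
          have hbit0 : Nat.testBit (c q1) 0 = Nat.testBit γ 0 := by
            simp only [cbin] at hcq
            cases h1 : Nat.testBit (c q1) 0 <;> cases h2 : Nat.testBit γ 0 <;> simp_all
          obtain ⟨hbits, hw'⟩ := climb_inv E B c γ t (B - 1) 1 q1 _ (by omega) le_rfl hw
          have hcγ : c q1 = γ := by
            refine eq_of_low_bits (hc q1).1 ((hc q1).2.trans hpow) hγ.1 (hγ.2.trans hpow) ?_
            intro j hj
            rcases j with _ | j'
            · exact hbit0
            · have := hbits j' (by omega)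
              have he' : 1 + j' = j' + 1 := by omega
              rw [he'] at this
              exact this
          exact .cons hE hcγ ((ih q1 hrest).mpr hw')
        · exact absurd hlt (by simp)
end

section
/- In the undirected graph G' with edge coloring c' constructed from a directed graph G=(V,E) with node coloring c:V→{1,2} (see context, with path length P=4), the following holds for every v∈V and every color c∈{1,2}: there is a walk z=(z₀,z₁,z₂,z₃,z₄,z₅) in G' with z₀=v_in and edge color sequence (2,c,c,1,2) under c' if and only if c=c(v) and z=path(v), where path(v):=(v_in, v^(1), v^(2), v^(3), v^(4), v_out). -/
/-- Let `G = (V, E)` be a directed graph with node coloring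
`c : V → {1,2}`. The undirected gadget graph `G'` has, for each `v ∈ V`, the six
vertices `v_in, v^(1), v^(2), v^(3), v^(4), v_out` (modeled as `(v, 0), …, (v, 5)`
in `V × Fin 6`), the path edges `{v_in, v^(1)}, …, {v^(4), v_out}`, and for each
`(u, v) ∈ E` the cross edge `{u_out, v_in}`. The (symmetric) edge coloring `c'` gives
cross edges color `1` and the path edges of `v` the colors `(2, c v, c v, 1, 2)`.
Then for every `v ∈ V` and `γ ∈ {1,2}`: a sequence `z₀, …, z₅` is a walk in `G'`
with `z₀ = v_in` and edge color sequence `(2, γ, γ, 1, 2)` iff `γ = c v` and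
`(z₀, …, z₅) = (v_in, v^(1), v^(2), v^(3), v^(4), v_out)`. -/
theorem edge_gadget_claim {V : Type*} (E : V → V → Prop)
    (c : V → ℕ) (hc : ∀ v, c v = 1 ∨ c v = 2)
    (E' : V × Fin 6 → V × Fin 6 → Prop)
    (hE' : ∀ p q, E' p q ↔
      ((p.2 = (5 : Fin 6) ∧ q.2 = 0 ∧ E p.1 q.1) ∨
       (q.2 = (5 : Fin 6) ∧ p.2 = 0 ∧ E q.1 p.1) ∨
       (p.1 = q.1 ∧ ((q.2 : ℕ) = (p.2 : ℕ) + 1 ∨ (p.2 : ℕ) = (q.2 : ℕ) + 1))))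
    (c' : V × Fin 6 → V × Fin 6 → ℕ)
    (hsymm : ∀ p q, c' p q = c' q p)
    (hcross : ∀ u v, E u v → c' (u, 5) (v, 0) = 1)
    (hp0 : ∀ v, c' (v, 0) (v, 1) = 2)
    (hp1 : ∀ v, c' (v, 1) (v, 2) = c v)
    (hp2 : ∀ v, c' (v, 2) (v, 3) = c v)
    (hp3 : ∀ v, c' (v, 3) (v, 4) = 1)
    (hp4 : ∀ v, c' (v, 4) (v, 5) = 2)
    (v : V) (γ : ℕ) (hγ : γ = 1 ∨ γ = 2)
    (z₀ z₁ z₂ z₃ z₄ z₅ : V × Fin 6) :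
    (z₀ = (v, 0) ∧
     E' z₀ z₁ ∧ c' z₀ z₁ = 2 ∧
     E' z₁ z₂ ∧ c' z₁ z₂ = γ ∧
     E' z₂ z₃ ∧ c' z₂ z₃ = γ ∧
     E' z₃ z₄ ∧ c' z₃ z₄ = 1 ∧
     E' z₄ z₅ ∧ c' z₄ z₅ = 2) ↔
      (γ = c v ∧ z₀ = (v, 0) ∧ z₁ = (v, 1) ∧ z₂ = (v, 2) ∧ z₃ = (v, 3) ∧
       z₄ = (v, 4) ∧ z₅ = (v, 5)) := by

  constructor
  · rintro ⟨h0, e01, c01, e12, c12, e23, c23, e34, c34, e45, c45⟩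
    subst h0
    -- generic middle-step analysis
    have key : ∀ (i : Fin 6) (q : V × Fin 6), E' (v, i) q → 1 ≤ (i : ℕ) → (i : ℕ) ≤ 4 →
        q.1 = v ∧ ((q.2 : ℕ) = (i : ℕ) + 1 ∨ (i : ℕ) = (q.2 : ℕ) + 1) := by
      intro i q h h1 h4
      rw [hE'] at h
      rcases h with ⟨h5, -, -⟩ | ⟨-, h0', -⟩ | ⟨hv, h⟩
      · simp only at h5; subst h5; exact absurd h4 (by decide)
      · simp only at h0'; subst h0'; exact absurd h1 (by decide)
      · exact ⟨hv.symm, h⟩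
    have fe : ∀ (w : V) (j : Fin 6) (k : ℕ) (hk : k < 6), (j : ℕ) = k →
        ((w, j) : V × Fin 6) = (w, ⟨k, hk⟩) := by
      intro w j k hk h
      exact congrArg _ (Fin.ext h)
    -- step 1 : z₁ = (v, 1)
    obtain ⟨w1, i1⟩ := z₁
    have hz1 : (w1, i1) = ((v, 1) : V × Fin 6) := by
      rw [hE'] at e01
      rcases e01 with ⟨h5, -, -⟩ | ⟨h5, -, hE⟩ | ⟨hv, h | h⟩
      · exact absurd (show (0 : Fin 6) = 5 from h5) (by decide)
      · simp only at h5
        subst h5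
        rw [hsymm, hcross w1 v hE] at c01
        omega
      · simp only at hv h
        subst hv
        exact fe v i1 1 (by omega) (by omega)
      · simp only at h; omega
    rw [hz1] at e12 c12
    -- step 2 : z₂ = (v, 0) or z₂ = (v, 2)
    obtain ⟨w2, i2⟩ := z₂
    obtain ⟨hw2, h2⟩ := key 1 (w2, i2) e12 (by decide) (by decide)
    simp only at hw2 h2
    subst w2
    rcases h2 with h2 | h2
    · -- forward: z₂ = (v, 2), the intended case
      have hz2 : ((v, i2) : V × Fin 6) = (v, 2) := fe v i2 2 (by omega) (by omega)
      rw [hz2] at e23 c23 c12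
      rw [hp1] at c12
      -- step 3
      obtain ⟨w3, i3⟩ := z₃
      obtain ⟨hw3, h3⟩ := key 2 (w3, i3) e23 (by decide) (by decide)
      simp only at hw3 h3
      subst w3
      rcases h3 with h3 | h3
      · -- z₃ = (v, 3), intended
        have hz3 : ((v, i3) : V × Fin 6) = (v, 3) := fe v i3 3 (by omega) (by omega)
        rw [hz3] at e34 c34
        -- step 4
        obtain ⟨w4, i4⟩ := z₄
        obtain ⟨hw4, h4⟩ := key 3 (w4, i4) e34 (by decide) (by decide)
        simp only at hw4 h4
        subst w4
        rcases h4 with h4 | h4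
        · -- z₄ = (v, 4), intended
          have hz4 : ((v, i4) : V × Fin 6) = (v, 4) := fe v i4 4 (by omega) (by omega)
          rw [hz4] at e45 c45
          -- step 5
          obtain ⟨w5, i5⟩ := z₅
          obtain ⟨hw5, h5⟩ := key 4 (w5, i5) e45 (by decide) (by decide)
          simp only at hw5 h5
          subst w5
          rcases h5 with h5 | h5
          · have hz5 : ((v, i5) : V × Fin 6) = (v, 5) := fe v i5 5 (by omega) (by omega)
            exact ⟨c12.symm, rfl, hz1, hz2, hz3, hz4, hz5⟩
          · -- z₅ = (v, 3) : color would be 1 ≠ 2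
            exfalso
            have hz5 : ((v, i5) : V × Fin 6) = (v, 3) := fe v i5 3 (by omega) (by omega)
            rw [hz5, hsymm, hp3] at c45
            omega
        · -- z₄ = (v, 2) : color c v = 1, then step 5 impossible
          exfalso
          have hz4 : ((v, i4) : V × Fin 6) = (v, 2) := fe v i4 2 (by omega) (by omega)
          rw [hz4] at e45 c45 c34
          rw [hsymm, hp2] at c34
          obtain ⟨w5, i5⟩ := z₅
          obtain ⟨hw5, h5⟩ := key 2 (w5, i5) e45 (by decide) (by decide)
          simp only at hw5 h5
          subst w5
          rcases h5 with h5 | h5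
          · have hz5 : ((v, i5) : V × Fin 6) = (v, 3) := fe v i5 3 (by omega) (by omega)
            rw [hz5, hp2] at c45
            omega
          · have hz5 : ((v, i5) : V × Fin 6) = (v, 1) := fe v i5 1 (by omega) (by omega)
            rw [hz5, hsymm, hp1] at c45
            omega
      · -- z₃ = (v, 1)
        exfalso
        have hz3 : ((v, i3) : V × Fin 6) = (v, 1) := fe v i3 1 (by omega) (by omega)
        rw [hz3] at e34 c34
        obtain ⟨w4, i4⟩ := z₄
        obtain ⟨hw4, h4⟩ := key 1 (w4, i4) e34 (by decide) (by decide)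
        simp only at hw4 h4
        subst w4
        rcases h4 with h4 | h4
        · -- z₄ = (v, 2) : color c v must be 1, then step 5 impossible
          have hz4 : ((v, i4) : V × Fin 6) = (v, 2) := fe v i4 2 (by omega) (by omega)
          rw [hz4] at e45 c45 c34
          rw [hp1] at c34
          obtain ⟨w5, i5⟩ := z₅
          obtain ⟨hw5, h5⟩ := key 2 (w5, i5) e45 (by decide) (by decide)
          simp only at hw5 h5
          subst w5
          rcases h5 with h5 | h5
          · have hz5 : ((v, i5) : V × Fin 6) = (v, 3) := fe v i5 3 (by omega) (by omega)
            rw [hz5, hp2] at c45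
            omega
          · have hz5 : ((v, i5) : V × Fin 6) = (v, 1) := fe v i5 1 (by omega) (by omega)
            rw [hz5, hsymm, hp1] at c45
            omega
        · -- z₄ = (v, 0) : color 2 ≠ 1
          have hz4 : ((v, i4) : V × Fin 6) = (v, 0) := fe v i4 0 (by omega) (by omega)
          rw [hz4, hsymm, hp0] at c34
          omega
    · -- z₂ = (v, 0) : then γ = 2
      exfalso
      have hz2 : ((v, i2) : V × Fin 6) = (v, 0) := fe v i2 0 (by omega) (by omega)
      rw [hz2] at e23 c23 c12
      rw [hsymm, hp0] at c12
      -- step 3 from (v, 0)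
      obtain ⟨w3, i3⟩ := z₃
      rw [hE'] at e23
      rcases e23 with ⟨h5, -, -⟩ | ⟨h5, -, hE⟩ | ⟨hv, h | h⟩
      · exact absurd (show (0 : Fin 6) = 5 from h5) (by decide)
      · simp only at h5
        subst h5
        rw [hsymm, hcross w3 v hE] at c23
        omega
      · -- z₃ = (v, 1)
        simp only at hv h
        subst hv
        have hz3 : ((v, i3) : V × Fin 6) = (v, 1) := fe v i3 1 (by omega) (by omega)
        rw [hz3] at e34 c34
        obtain ⟨w4, i4⟩ := z₄
        obtain ⟨hw4, h4⟩ := key 1 (w4, i4) e34 (by decide) (by decide)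
        simp only at hw4 h4
        subst w4
        rcases h4 with h4 | h4
        · have hz4 : ((v, i4) : V × Fin 6) = (v, 2) := fe v i4 2 (by omega) (by omega)
          rw [hz4] at e45 c45 c34
          rw [hp1] at c34
          obtain ⟨w5, i5⟩ := z₅
          obtain ⟨hw5, h5⟩ := key 2 (w5, i5) e45 (by decide) (by decide)
          simp only at hw5 h5
          subst w5
          rcases h5 with h5 | h5
          · have hz5 : ((v, i5) : V × Fin 6) = (v, 3) := fe v i5 3 (by omega) (by omega)
            rw [hz5, hp2] at c45
            omega
          · have hz5 : ((v, i5) : V × Fin 6) = (v, 1) := fe v i5 1 (by omega) (by omega)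
            rw [hz5, hsymm, hp1] at c45
            omega
        · have hz4 : ((v, i4) : V × Fin 6) = (v, 0) := fe v i4 0 (by omega) (by omega)
          rw [hz4, hsymm, hp0] at c34
          omega
      · simp only at h; omega
  · rintro ⟨hγ', rfl, rfl, rfl, rfl, rfl, rfl⟩
    have step : ∀ i j : Fin 6, (j : ℕ) = (i : ℕ) + 1 → E' (v, i) (v, j) := by
      intro i j h
      rw [hE']
      exact Or.inr (Or.inr ⟨rfl, Or.inl h⟩)
    subst hγ'
    exact ⟨rfl, step 0 1 rfl, hp0 v, step 1 2 rfl, hp1 v, step 2 3 rfl, hp2 v,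
      step 3 4 rfl, hp3 v, step 4 5 rfl, hp4 v⟩
end

section
/- Let G=(V,E) be a directed graph with node coloring c:V→{1,2} and let G'=(V',E') with edge coloring c' be the undirected graph constructed from G as in the context. For c∈{1,2} write col(c):=(2,c,c,1,2). Then for all s,t∈V, every ℓ≥1 and all colors c₁,…,c_ℓ∈{1,2}: there is a walk of length ℓ from s to t in G with node color sequence c₁,…,c_ℓ if and only if there is a walk of length 6ℓ from s_out to t_out in G' with edge color sequence 1, col(c₁), 1, col(c₂), …, 1, col(c_ℓ). -/
/-- `EdgeColoredWalk E c s t cs` : there is a walk `s = v₀, v₁, …, v_ℓ = t` in the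
graph with edge relation `E` whose edge color sequence `c v₀ v₁, …, c v_{ℓ-1} v_ℓ`
equals `cs`. -/
inductive EdgeColoredWalk {V σ : Type*} (E : V → V → Prop) (c : V → V → σ) :
    V → V → List σ → Prop
  | nil (v : V) : EdgeColoredWalk E c v v []
  | cons {u v w : V} {a : σ} {cs : List σ} (he : E u v) (hc : c u v = a)
      (hw : EdgeColoredWalk E c v w cs) : EdgeColoredWalk E c u w (a :: cs)

/-- Let `G = (V, E)` be a directed graph with node coloring
`c : V → {1,2}` and let `G'` with edge coloring `c'` be the undirected gadget graph:
for each `v ∈ V` the six vertices `v_in = (v,0), v^(1) = (v,1), …, v_out = (v,5)`,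
path edges `{v_in, v^(1)}, …, {v^(4), v_out}` colored `(2, c v, c v, 1, 2)`, and
cross edges `{u_out, v_in}` colored `1` for every `(u, v) ∈ E`. Writing
`col γ := (2, γ, γ, 1, 2)`, for all `s, t ∈ V`, `ℓ ≥ 1` and `c₁, …, c_ℓ ∈ {1,2}`:
there is a walk of length `ℓ` from `s` to `t` in `G` with node color sequence
`c₁, …, c_ℓ` iff there is a walk of length `6ℓ` from `s_out` to `t_out` in `G'` with
edge color sequence `1, col c₁, 1, col c₂, …, 1, col c_ℓ`. -/
theorem directed_node2_to_undirected_edge2 {V : Type*} (E : V → V → Prop)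
    (c : V → ℕ) (hc : ∀ v, c v = 1 ∨ c v = 2)
    (E' : V × Fin 6 → V × Fin 6 → Prop)
    (hE' : ∀ p q, E' p q ↔
      ((p.2 = (5 : Fin 6) ∧ q.2 = 0 ∧ E p.1 q.1) ∨
       (q.2 = (5 : Fin 6) ∧ p.2 = 0 ∧ E q.1 p.1) ∨
       (p.1 = q.1 ∧ ((q.2 : ℕ) = (p.2 : ℕ) + 1 ∨ (p.2 : ℕ) = (q.2 : ℕ) + 1))))
    (c' : V × Fin 6 → V × Fin 6 → ℕ)
    (hsymm : ∀ p q, c' p q = c' q p)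
    (hcross : ∀ u v, E u v → c' (u, 5) (v, 0) = 1)
    (hp0 : ∀ v, c' (v, 0) (v, 1) = 2)
    (hp1 : ∀ v, c' (v, 1) (v, 2) = c v)
    (hp2 : ∀ v, c' (v, 2) (v, 3) = c v)
    (hp3 : ∀ v, c' (v, 3) (v, 4) = 1)
    (hp4 : ∀ v, c' (v, 4) (v, 5) = 2)
    (s t : V) (cs : List ℕ) (hcs : ∀ γ ∈ cs, γ = 1 ∨ γ = 2) (hne : cs ≠ []) :
    NodeColoredWalk E c s t cs ↔
      EdgeColoredWalk E' c' (s, 5) (t, 5)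
        (cs.flatMap fun γ => [1, 2, γ, γ, 1, 2]) := by
  classical
  -- symmetric color facts
  have s10 : ∀ w : V, c' (w, (1:Fin 6)) (w, 0) = 2 := fun w => (hsymm _ _).trans (hp0 w)
  have s21 : ∀ w : V, c' (w, (2:Fin 6)) (w, 1) = c w := fun w => (hsymm _ _).trans (hp1 w)
  have s32 : ∀ w : V, c' (w, (3:Fin 6)) (w, 2) = c w := fun w => (hsymm _ _).trans (hp2 w)
  have s43 : ∀ w : V, c' (w, (4:Fin 6)) (w, 3) = 1 := fun w => (hsymm _ _).trans (hp3 w)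
  have s54 : ∀ w : V, c' (w, (5:Fin 6)) (w, 4) = 2 := fun w => (hsymm _ _).trans (hp4 w)
  have cross' : ∀ u v : V, E u v → c' (v, (0:Fin 6)) (u, 5) = 1 :=
    fun u v h => (hsymm _ _).trans (hcross u v h)
  -- neighbour lemmas
  have nbr0 : ∀ (v u : V) (j : Fin 6), E' (v, 0) (u, j) → (j = 5 ∧ E u v) ∨ (v = u ∧ j = 1) := by
    intro v u j h
    have hjl := j.isLt
    rcases (hE' _ _).mp h with ⟨h5, _⟩ | ⟨ha, _, hb⟩ | ⟨ha, hb⟩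
    · simp at h5
    · exact Or.inl ⟨ha, hb⟩
    · refine Or.inr ⟨ha, Fin.ext ?_⟩
      have hb' : (j : ℕ) = ((0:Fin 6) : ℕ) + 1 ∨ ((0:Fin 6) : ℕ) = (j : ℕ) + 1 := hb
      have h0 : ((0:Fin 6) : ℕ) = 0 := rfl
      have h1 : ((1:Fin 6) : ℕ) = 1 := rfl
      omega
  have nbr1 : ∀ (v u : V) (j : Fin 6), E' (v, 1) (u, j) → v = u ∧ (j = 0 ∨ j = 2) := by
    intro v u j h
    have hjl := j.isLt
    rcases (hE' _ _).mp h with ⟨h5, _⟩ | ⟨_, h0, _⟩ | ⟨ha, hb⟩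
    · simp at h5
    · simp at h0
    · refine ⟨ha, ?_⟩
      have hb' : (j : ℕ) = ((1:Fin 6) : ℕ) + 1 ∨ ((1:Fin 6) : ℕ) = (j : ℕ) + 1 := hb
      have h1 : ((1:Fin 6) : ℕ) = 1 := rfl
      have h0 : ((0:Fin 6) : ℕ) = 0 := rfl
      have h2 : ((2:Fin 6) : ℕ) = 2 := rfl
      rcases hb' with h | h
      · exact Or.inr (Fin.ext (by omega))
      · exact Or.inl (Fin.ext (by omega))
  have nbr2 : ∀ (v u : V) (j : Fin 6), E' (v, 2) (u, j) → v = u ∧ (j = 1 ∨ j = 3) := by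
    intro v u j h
    have hjl := j.isLt
    rcases (hE' _ _).mp h with ⟨h5, _⟩ | ⟨_, h0, _⟩ | ⟨ha, hb⟩
    · simp at h5
    · simp at h0
    · refine ⟨ha, ?_⟩
      have hb' : (j : ℕ) = ((2:Fin 6) : ℕ) + 1 ∨ ((2:Fin 6) : ℕ) = (j : ℕ) + 1 := hb
      have h2 : ((2:Fin 6) : ℕ) = 2 := rfl
      have h1 : ((1:Fin 6) : ℕ) = 1 := rfl
      have h3 : ((3:Fin 6) : ℕ) = 3 := rfl
      rcases hb' with h | h
      · exact Or.inr (Fin.ext (by omega))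
      · exact Or.inl (Fin.ext (by omega))
  have nbr3 : ∀ (v u : V) (j : Fin 6), E' (v, 3) (u, j) → v = u ∧ (j = 2 ∨ j = 4) := by
    intro v u j h
    have hjl := j.isLt
    rcases (hE' _ _).mp h with ⟨h5, _⟩ | ⟨_, h0, _⟩ | ⟨ha, hb⟩
    · simp at h5
    · simp at h0
    · refine ⟨ha, ?_⟩
      have hb' : (j : ℕ) = ((3:Fin 6) : ℕ) + 1 ∨ ((3:Fin 6) : ℕ) = (j : ℕ) + 1 := hb
      have h3 : ((3:Fin 6) : ℕ) = 3 := rfl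
      have h2 : ((2:Fin 6) : ℕ) = 2 := rfl
      have h4 : ((4:Fin 6) : ℕ) = 4 := rfl
      rcases hb' with h | h
      · exact Or.inr (Fin.ext (by omega))
      · exact Or.inl (Fin.ext (by omega))
  have nbr4 : ∀ (v u : V) (j : Fin 6), E' (v, 4) (u, j) → v = u ∧ (j = 3 ∨ j = 5) := by
    intro v u j h
    have hjl := j.isLt
    rcases (hE' _ _).mp h with ⟨h5, _⟩ | ⟨_, h0, _⟩ | ⟨ha, hb⟩
    · simp at h5
    · simp at h0
    · refine ⟨ha, ?_⟩
      have hb' : (j : ℕ) = ((4:Fin 6) : ℕ) + 1 ∨ ((4:Fin 6) : ℕ) = (j : ℕ) + 1 := hb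
      have h4 : ((4:Fin 6) : ℕ) = 4 := rfl
      have h3 : ((3:Fin 6) : ℕ) = 3 := rfl
      have h5' : ((5:Fin 6) : ℕ) = 5 := rfl
      rcases hb' with h | h
      · exact Or.inr (Fin.ext (by omega))
      · exact Or.inl (Fin.ext (by omega))
  have nbr5 : ∀ (v u : V) (j : Fin 6), E' (v, 5) (u, j) → (j = 0 ∧ E v u) ∨ (v = u ∧ j = 4) := by
    intro v u j h
    have hjl := j.isLt
    rcases (hE' _ _).mp h with ⟨_, ha, hb⟩ | ⟨_, h0, _⟩ | ⟨ha, hb⟩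
    · exact Or.inl ⟨ha, hb⟩
    · simp at h0
    · refine Or.inr ⟨ha, Fin.ext ?_⟩
      have hb' : (j : ℕ) = ((5:Fin 6) : ℕ) + 1 ∨ ((5:Fin 6) : ℕ) = (j : ℕ) + 1 := hb
      have h5 : ((5:Fin 6) : ℕ) = 5 := rfl
      have h4 : ((4:Fin 6) : ℕ) = 4 := rfl
      omega
  -- inversion lemmas
  have inv_nil : ∀ (p q : V × Fin 6), EdgeColoredWalk E' c' p q [] → p = q := by
    intro p q hw
    cases hw
    rfl
  have inv_cons : ∀ (p q : V × Fin 6) (a : ℕ) (rest : List ℕ),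
      EdgeColoredWalk E' c' p q (a :: rest) →
      ∃ r, E' p r ∧ c' p r = a ∧ EdgeColoredWalk E' c' r q rest := by
    intro p q a rest hw
    cases hw with
    | cons he hcc hw => exact ⟨_, he, hcc, hw⟩
  -- edge construction lemmas
  have epath : ∀ (v : V) (i j : Fin 6), ((j : ℕ) = (i : ℕ) + 1) → E' (v, i) (v, j) :=
    fun v i j h => (hE' _ _).mpr (Or.inr (Or.inr ⟨rfl, Or.inl h⟩))
  have ecross : ∀ u v : V, E u v → E' (u, (5:Fin 6)) (v, 0) :=
    fun u v h => (hE' _ _).mpr (Or.inl ⟨rfl, rfl, h⟩)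
  -- forward direction
  have fwd : ∀ (s t : V) (cs : List ℕ), NodeColoredWalk E c s t cs →
      EdgeColoredWalk E' c' (s, (5:Fin 6)) (t, (5:Fin 6))
        (cs.flatMap fun γ => [1, 2, γ, γ, 1, 2]) := by
    intro s t cs h
    induction h with
    | nil v => simpa using EdgeColoredWalk.nil (v, (5:Fin 6))
    | cons he hcv hw ih =>
      simp only [List.flatMap_cons, List.cons_append, List.nil_append]
      exact .cons (ecross _ _ he) (hcross _ _ he)
        (.cons (epath _ 0 1 rfl) (hp0 _)
        (.cons (epath _ 1 2 rfl) ((hp1 _).trans hcv)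
        (.cons (epath _ 2 3 rfl) ((hp2 _).trans hcv)
        (.cons (epath _ 3 4 rfl) (hp3 _)
        (.cons (epath _ 4 5 rfl) (hp4 _) ih)))))
  -- backward direction
  have bwd : ∀ (cs : List ℕ) (v : V),
      EdgeColoredWalk E' c' (v, (5:Fin 6)) (t, (5:Fin 6))
        (cs.flatMap fun γ => [1, 2, γ, γ, 1, 2]) →
      NodeColoredWalk E c v t cs := by
    intro cs
    induction cs with
    | nil =>
      intro v hw
      simp only [List.flatMap_nil] at hw
      have h := inv_nil _ _ hw
      injection h with h1 _
      subst h1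
      exact NodeColoredWalk.nil v
    | cons γ cs' ih =>
      intro v hw
      simp only [List.flatMap_cons, List.cons_append, List.nil_append] at hw
      -- step 1 : must cross to some (w, 0) with E v w
      obtain ⟨⟨w, j⟩, he1, hc1, hw⟩ := inv_cons _ _ _ _ hw
      rcases nbr5 v w j he1 with ⟨rfl, hEvw⟩ | ⟨rfl, rfl⟩
      swap
      · rw [s54] at hc1; exact absurd hc1 (by norm_num)
      -- step 2 : must go to (w, 1)
      obtain ⟨⟨u2, j2⟩, he2, hc2, hw⟩ := inv_cons _ _ _ _ hw
      rcases nbr0 w u2 j2 he2 with ⟨rfl, hE2⟩ | ⟨rfl, rfl⟩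
      · rw [cross' _ _ hE2] at hc2; exact absurd hc2 (by norm_num)
      -- step 3 : either back to (w, 0) (branch A) or forward to (w, 2) (branch B)
      obtain ⟨⟨u3, j3⟩, he3, hc3, hw⟩ := inv_cons _ _ _ _ hw
      obtain ⟨rfl, hj3⟩ := nbr1 w u3 j3 he3
      rcases hj3 with rfl | rfl
      · -- branch A : back at (w, 0), hc3 : 2 = γ
        rw [s10] at hc3
        obtain ⟨⟨u4, j4⟩, he4, hc4, hw⟩ := inv_cons _ _ _ _ hw
        rcases nbr0 w u4 j4 he4 with ⟨rfl, hE4⟩ | ⟨rfl, rfl⟩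
        · rw [cross' _ _ hE4] at hc4
          exact absurd (hc4.trans hc3.symm) (by norm_num)
        · -- back at (w, 1)
          obtain ⟨⟨u5, j5⟩, he5, hc5, hw⟩ := inv_cons _ _ _ _ hw
          obtain ⟨rfl, hj5⟩ := nbr1 w u5 j5 he5
          rcases hj5 with rfl | rfl
          · rw [s10] at hc5; exact absurd hc5 (by norm_num)
          · rw [hp1] at hc5
            obtain ⟨⟨u6, j6⟩, he6, hc6, hw⟩ := inv_cons _ _ _ _ hw
            obtain ⟨rfl, hj6⟩ := nbr2 w u6 j6 he6
            rcases hj6 with rfl | rfl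
            · rw [s21, hc5] at hc6; exact absurd hc6 (by norm_num)
            · rw [hp2, hc5] at hc6; exact absurd hc6 (by norm_num)
      · -- branch B : at (w, 2), hc3 : c w = γ
        rw [hp1] at hc3
        obtain ⟨⟨u4, j4⟩, he4, hc4, hw⟩ := inv_cons _ _ _ _ hw
        obtain ⟨rfl, hj4⟩ := nbr2 w u4 j4 he4
        rcases hj4 with rfl | rfl
        · -- back at (w, 1)
          obtain ⟨⟨u5, j5⟩, he5, hc5, hw⟩ := inv_cons _ _ _ _ hw
          obtain ⟨rfl, hj5⟩ := nbr1 w u5 j5 he5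
          rcases hj5 with rfl | rfl
          · rw [s10] at hc5; exact absurd hc5 (by norm_num)
          · rw [hp1] at hc5
            obtain ⟨⟨u6, j6⟩, he6, hc6, hw⟩ := inv_cons _ _ _ _ hw
            obtain ⟨rfl, hj6⟩ := nbr2 w u6 j6 he6
            rcases hj6 with rfl | rfl
            · rw [s21, hc5] at hc6; exact absurd hc6 (by norm_num)
            · rw [hp2, hc5] at hc6; exact absurd hc6 (by norm_num)
        · -- at (w, 3)
          obtain ⟨⟨u5, j5⟩, he5, hc5, hw⟩ := inv_cons _ _ _ _ hw
          obtain ⟨rfl, hj5⟩ := nbr3 w u5 j5 he5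
          rcases hj5 with rfl | rfl
          · -- back at (w, 2), hc5 : c w = 1
            rw [s32] at hc5
            obtain ⟨⟨u6, j6⟩, he6, hc6, hw⟩ := inv_cons _ _ _ _ hw
            obtain ⟨rfl, hj6⟩ := nbr2 w u6 j6 he6
            rcases hj6 with rfl | rfl
            · rw [s21, hc5] at hc6; exact absurd hc6 (by norm_num)
            · rw [hp2, hc5] at hc6; exact absurd hc6 (by norm_num)
          · -- at (w, 4)
            obtain ⟨⟨u6, j6⟩, he6, hc6, hw⟩ := inv_cons _ _ _ _ hw
            obtain ⟨rfl, hj6⟩ := nbr4 w u6 j6 he6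
            rcases hj6 with rfl | rfl
            · rw [s43] at hc6; exact absurd hc6 (by norm_num)
            · -- at (w, 5), recurse
              exact NodeColoredWalk.cons hEvw hc3 (ih w hw)
  exact ⟨fun h => fwd s t cs h, fun h => bwd cs s h⟩
end

section
/- In the undirected graph G' with node coloring c' constructed from a directed graph G=(V,E) with node coloring c:V→{1,2} (see context, with path length P=4), the following holds for every v∈V and every color c∈{1,2}: there is a walk z=(z₀,z₁,z₂,z₃,z₄,z₅) in G' with z₀=v_in and node color sequence (2,c,2,2,1) under c' if and only if c=c(v) and z=path(v), where path(v):=(v_in, v^(1), v^(2), v^(3), v^(4), v_out). -/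
/-- Let `G = (V, E)` be a directed graph with node coloring
`c : V → {1,2}`. The undirected gadget graph `G'` has, for each `v ∈ V`, the six
vertices `v_in = (v,0), v^(1) = (v,1), …, v^(4) = (v,4), v_out = (v,5)` in
`V × Fin 6`, the path edges `{v_in, v^(1)}, …, {v^(4), v_out}`, and for each
`(u, v) ∈ E` the cross edge `{u_out, v_in}`. The node coloring `c''` is given by
`c'' v_in = c'' v_out = 1` and `(c'' v^(1), c'' v^(2), c'' v^(3), c'' v^(4)) =
(2, c v, 2, 2)`. Then for every `v ∈ V` and `γ ∈ {1,2}`: a sequence `z₀, …, z₅` is a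
walk in `G'` with `z₀ = v_in` and node color sequence `(2, γ, 2, 2, 1)` iff `γ = c v`
and `(z₀, …, z₅) = (v_in, v^(1), v^(2), v^(3), v^(4), v_out)`. -/
theorem node_gadget_claim {V : Type*} (E : V → V → Prop)
    (c : V → ℕ) (hc : ∀ v, c v = 1 ∨ c v = 2)
    (E' : V × Fin 6 → V × Fin 6 → Prop)
    (hE' : ∀ p q, E' p q ↔
      ((p.2 = (5 : Fin 6) ∧ q.2 = 0 ∧ E p.1 q.1) ∨
       (q.2 = (5 : Fin 6) ∧ p.2 = 0 ∧ E q.1 p.1) ∨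
       (p.1 = q.1 ∧ ((q.2 : ℕ) = (p.2 : ℕ) + 1 ∨ (p.2 : ℕ) = (q.2 : ℕ) + 1))))
    (c'' : V × Fin 6 → ℕ)
    (hc'' : ∀ v : V, c'' (v, 0) = 1 ∧ c'' (v, 1) = 2 ∧ c'' (v, 2) = c v ∧
      c'' (v, 3) = 2 ∧ c'' (v, 4) = 2 ∧ c'' (v, 5) = 1)
    (v : V) (γ : ℕ) (hγ : γ = 1 ∨ γ = 2)
    (z₀ z₁ z₂ z₃ z₄ z₅ : V × Fin 6) :
    (z₀ = (v, 0) ∧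
     E' z₀ z₁ ∧ c'' z₁ = 2 ∧
     E' z₁ z₂ ∧ c'' z₂ = γ ∧
     E' z₂ z₃ ∧ c'' z₃ = 2 ∧
     E' z₃ z₄ ∧ c'' z₄ = 2 ∧
     E' z₄ z₅ ∧ c'' z₅ = 1) ↔
      (γ = c v ∧ z₀ = (v, 0) ∧ z₁ = (v, 1) ∧ z₂ = (v, 2) ∧ z₃ = (v, 3) ∧
       z₄ = (v, 4) ∧ z₅ = (v, 5)) := by
  -- helper: from (a,2) every neighbor has color ≠ 1
  have no1 : ∀ (a : V) (w : V × Fin 6), E' (a, (2 : Fin 6)) w → c'' w ≠ 1 := by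
    rintro a ⟨b, j⟩ hw hcol
    rw [hE'] at hw
    rcases hw with ⟨h, -, -⟩ | ⟨-, h, -⟩ | ⟨hab, h | h⟩
    · exact absurd (show (2 : ℕ) = 5 from congrArg Fin.val h) (by omega)
    · exact absurd (show (2 : ℕ) = 0 from congrArg Fin.val h) (by omega)
    · have hj : j = (3 : Fin 6) := Fin.ext (show (j : ℕ) = 3 from h)
      subst hj
      cases hab
      have := (hc'' a).2.2.2.1
      omega
    · have hj : j = (1 : Fin 6) := by
        apply Fin.ext
        have h' : (2 : ℕ) = (j : ℕ) + 1 := h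
        omega
      subst hj
      cases hab
      have := (hc'' a).2.1
      omega
  obtain ⟨a₁, i₁⟩ := z₁
  obtain ⟨a₂, i₂⟩ := z₂
  obtain ⟨a₃, i₃⟩ := z₃
  obtain ⟨a₄, i₄⟩ := z₄
  obtain ⟨a₅, i₅⟩ := z₅
  constructor
  · rintro ⟨rfl, e01, h1, e12, h2, e23, h3, e34, h4, e45, h5⟩
    rw [hE'] at e01 e12 e23 e34
    -- step 1: z₁ = (v,1)
    have hz1 : v = a₁ ∧ i₁ = (1 : Fin 6) := by
      rcases e01 with ⟨h, -, -⟩ | ⟨h, -, -⟩ | ⟨hab, h | h⟩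
      · exact absurd (show (0 : ℕ) = 5 from congrArg Fin.val h) (by omega)
      · subst h; have := (hc'' a₁).2.2.2.2.2; omega
      · exact ⟨hab, Fin.ext (show (i₁ : ℕ) = 1 from h)⟩
      · have h' : (0 : ℕ) = (i₁ : ℕ) + 1 := h
        omega
    obtain ⟨rfl, rfl⟩ := hz1
    -- step 2: z₂ = (v,2) or z₂ = (v,0)
    have hz2 : v = a₂ ∧ (i₂ = (2 : Fin 6) ∨ i₂ = (0 : Fin 6)) := by
      rcases e12 with ⟨h, -, -⟩ | ⟨-, h, -⟩ | ⟨hab, h | h⟩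
      · exact absurd (show (1 : ℕ) = 5 from congrArg Fin.val h) (by omega)
      · exact absurd (show (1 : ℕ) = 0 from congrArg Fin.val h) (by omega)
      · exact ⟨hab, Or.inl (Fin.ext (show (i₂ : ℕ) = 2 from h))⟩
      · refine ⟨hab, Or.inr (Fin.ext ?_)⟩
        have h' : (1 : ℕ) = (i₂ : ℕ) + 1 := h
        omega
    obtain ⟨rfl, hi2⟩ := hz2
    rcases hi2 with rfl | rfl
    · -- z₂ = (v,2), so γ = c v
      have hγc : γ = c v := by have := (hc'' v).2.2.1; omega
      -- step 3: z₃ = (v,1) or (v,3)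
      have hz3 : v = a₃ ∧ (i₃ = (1 : Fin 6) ∨ i₃ = (3 : Fin 6)) := by
        rcases e23 with ⟨h, -, -⟩ | ⟨-, h, -⟩ | ⟨hab, h | h⟩
        · exact absurd (show (2 : ℕ) = 5 from congrArg Fin.val h) (by omega)
        · exact absurd (show (2 : ℕ) = 0 from congrArg Fin.val h) (by omega)
        · exact ⟨hab, Or.inr (Fin.ext (show (i₃ : ℕ) = 3 from h))⟩
        · refine ⟨hab, Or.inl (Fin.ext ?_)⟩
          have h' : (2 : ℕ) = (i₃ : ℕ) + 1 := h
          omega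
      obtain ⟨rfl, hi3⟩ := hz3
      rcases hi3 with rfl | rfl
      · -- z₃ = (v,1): z₄ = (v,2) or (v,0); both die
        have hz4 : v = a₄ ∧ (i₄ = (2 : Fin 6) ∨ i₄ = (0 : Fin 6)) := by
          rcases e34 with ⟨h, -, -⟩ | ⟨-, h, -⟩ | ⟨hab, h | h⟩
          · exact absurd (show (1 : ℕ) = 5 from congrArg Fin.val h) (by omega)
          · exact absurd (show (1 : ℕ) = 0 from congrArg Fin.val h) (by omega)
          · exact ⟨hab, Or.inl (Fin.ext (show (i₄ : ℕ) = 2 from h))⟩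
          · refine ⟨hab, Or.inr (Fin.ext ?_)⟩
            have h' : (1 : ℕ) = (i₄ : ℕ) + 1 := h
            omega
        obtain ⟨rfl, hi4⟩ := hz4
        rcases hi4 with rfl | rfl
        · exact absurd h5 (no1 v _ e45)
        · have := (hc'' v).1; omega
      · -- z₃ = (v,3): z₄ = (v,4) or (v,2)
        have hz4 : v = a₄ ∧ (i₄ = (4 : Fin 6) ∨ i₄ = (2 : Fin 6)) := by
          rcases e34 with ⟨h, -, -⟩ | ⟨-, h, -⟩ | ⟨hab, h | h⟩
          · exact absurd (show (3 : ℕ) = 5 from congrArg Fin.val h) (by omega)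
          · exact absurd (show (3 : ℕ) = 0 from congrArg Fin.val h) (by omega)
          · exact ⟨hab, Or.inl (Fin.ext (show (i₄ : ℕ) = 4 from h))⟩
          · refine ⟨hab, Or.inr (Fin.ext ?_)⟩
            have h' : (3 : ℕ) = (i₄ : ℕ) + 1 := h
            omega
        obtain ⟨rfl, hi4⟩ := hz4
        rcases hi4 with rfl | rfl
        · -- z₄ = (v,4): z₅ forced to (v,5)
          rw [hE'] at e45
          have hz5 : v = a₅ ∧ i₅ = (5 : Fin 6) := by
            rcases e45 with ⟨h, -, -⟩ | ⟨-, h, -⟩ | ⟨hab, h | h⟩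
            · exact absurd (show (4 : ℕ) = 5 from congrArg Fin.val h) (by omega)
            · exact absurd (show (4 : ℕ) = 0 from congrArg Fin.val h) (by omega)
            · exact ⟨hab, Fin.ext (show (i₅ : ℕ) = 5 from h)⟩
            · exfalso
              have hj : i₅ = (3 : Fin 6) := by
                apply Fin.ext
                have h' : (4 : ℕ) = (i₅ : ℕ) + 1 := h
                omega
              subst hj
              cases hab
              have := (hc'' v).2.2.2.1
              omega
          obtain ⟨rfl, rfl⟩ := hz5
          exact ⟨hγc, rfl, rfl, rfl, rfl, rfl, rfl⟩
        · exact absurd h5 (no1 v _ e45)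
    · -- z₂ = (v,0): then z₃ = (v,1), z₄ = (v,2) or (v,0), both die
      have hz3 : v = a₃ ∧ i₃ = (1 : Fin 6) := by
        rcases e23 with ⟨h, -, -⟩ | ⟨h, -, -⟩ | ⟨hab, h | h⟩
        · exact absurd (show (0 : ℕ) = 5 from congrArg Fin.val h) (by omega)
        · subst h; have := (hc'' a₃).2.2.2.2.2; omega
        · exact ⟨hab, Fin.ext (show (i₃ : ℕ) = 1 from h)⟩
        · have h' : (0 : ℕ) = (i₃ : ℕ) + 1 := h
          omega
      obtain ⟨rfl, rfl⟩ := hz3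
      have hz4 : v = a₄ ∧ (i₄ = (2 : Fin 6) ∨ i₄ = (0 : Fin 6)) := by
        rcases e34 with ⟨h, -, -⟩ | ⟨-, h, -⟩ | ⟨hab, h | h⟩
        · exact absurd (show (1 : ℕ) = 5 from congrArg Fin.val h) (by omega)
        · exact absurd (show (1 : ℕ) = 0 from congrArg Fin.val h) (by omega)
        · exact ⟨hab, Or.inl (Fin.ext (show (i₄ : ℕ) = 2 from h))⟩
        · refine ⟨hab, Or.inr (Fin.ext ?_)⟩
          have h' : (1 : ℕ) = (i₄ : ℕ) + 1 := h
          omega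
      obtain ⟨rfl, hi4⟩ := hz4
      rcases hi4 with rfl | rfl
      · exact absurd h5 (no1 v _ e45)
      · have := (hc'' v).1; omega
  · rintro ⟨rfl, rfl, h1, h2, h3, h4, h5⟩
    cases h1; cases h2; cases h3; cases h4; cases h5
    have hcv := hc'' v
    refine ⟨rfl, ?_, ?_, ?_, ?_, ?_, ?_, ?_, ?_, ?_, ?_⟩ <;>
      first
        | (rw [hE']; right; right; exact ⟨rfl, Or.inl rfl⟩)
        | omega
end

section
/- Let G=(V,E) be a directed graph with node coloring c:V→{1,2} and let G'=(V',E') with node coloring c' be the undirected graph constructed from G as in the context. For c∈{1,2} write col(c):=(2,c,2,2,1). Then for all s,t∈V, every ℓ≥1 and all colors c₁,…,c_ℓ∈{1,2}: there is a walk of length ℓ from s to t in G with node color sequence c₁,…,c_ℓ if and only if there is a walk of length 6ℓ from s_out to t_out in G' with node color sequence 1, col(c₁), 1, col(c₂), …, 1, col(c_ℓ). -/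
namespace Gadget9

variable {V σ : Type*}

lemma ncw_append {E : V → V → Prop} {c : V → σ} {u v w : V} {l1 l2 : List σ}
    (h1 : NodeColoredWalk E c u v l1) (h2 : NodeColoredWalk E c v w l2) :
    NodeColoredWalk E c u w (l1 ++ l2) := by
  induction h1 with
  | nil => simpa
  | cons he hc _ ih => exact .cons he hc (ih h2)

lemma ncw_nil_inv {E : V → V → Prop} {c : V → σ} {u w : V}
    (h : NodeColoredWalk E c u w []) : u = w := by
  cases h; rfl

lemma ncw_cons_inv {E : V → V → Prop} {c : V → σ} {u w : V} {a : σ} {l : List σ}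
    (h : NodeColoredWalk E c u w (a :: l)) :
    ∃ v, E u v ∧ c v = a ∧ NodeColoredWalk E c v w l := by
  cases h with
  | cons he hc hw => exact ⟨_, he, hc, hw⟩

variable {E : V → V → Prop} {E' : V × Fin 6 → V × Fin 6 → Prop}
    (hE' : ∀ p q, E' p q ↔
      ((p.2 = (5 : Fin 6) ∧ q.2 = 0 ∧ E p.1 q.1) ∨
       (q.2 = (5 : Fin 6) ∧ p.2 = 0 ∧ E q.1 p.1) ∨
       (p.1 = q.1 ∧ ((q.2 : ℕ) = (p.2 : ℕ) + 1 ∨ (p.2 : ℕ) = (q.2 : ℕ) + 1))))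

include hE'

lemma nbr {v w : V} {j k : Fin 6} (he : E' (v, j) (w, k)) :
    (j = 5 ∧ k = 0 ∧ E v w) ∨ (k = 5 ∧ j = 0 ∧ E w v) ∨
      (v = w ∧ ((k : ℕ) = (j : ℕ) + 1 ∨ (j : ℕ) = (k : ℕ) + 1)) :=
  (hE' _ _).1 he

lemma nbr0 {v w : V} {k : Fin 6} (he : E' (v, 0) (w, k)) :
    (v = w ∧ k = 1) ∨ (k = 5 ∧ E w v) := by
  rcases nbr hE' he with ⟨h1, h2, h3⟩ | ⟨h1, h2, h3⟩ | ⟨rfl, h⟩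
  · exact absurd h1 (by decide)
  · exact Or.inr ⟨h1, h3⟩
  · have hk := k.isLt
    rw [show ((0 : Fin 6) : ℕ) = 0 from rfl] at h
    exact Or.inl ⟨rfl, Fin.ext (show (k : ℕ) = 1 by omega)⟩

lemma nbr1 {v w : V} {k : Fin 6} (he : E' (v, 1) (w, k)) :
    v = w ∧ (k = 0 ∨ k = 2) := by
  rcases nbr hE' he with ⟨h1, h2, h3⟩ | ⟨h1, h2, h3⟩ | ⟨rfl, h⟩
  · exact absurd h1 (by decide)
  · exact absurd h2 (by decide)
  · have hk := k.isLt
    rw [show ((1 : Fin 6) : ℕ) = 1 from rfl] at h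
    refine ⟨rfl, ?_⟩
    rcases h with h | h
    · exact Or.inr (Fin.ext (show (k : ℕ) = 2 by omega))
    · exact Or.inl (Fin.ext (show (k : ℕ) = 0 by omega))

lemma nbr2 {v w : V} {k : Fin 6} (he : E' (v, 2) (w, k)) :
    v = w ∧ (k = 1 ∨ k = 3) := by
  rcases nbr hE' he with ⟨h1, h2, h3⟩ | ⟨h1, h2, h3⟩ | ⟨rfl, h⟩
  · exact absurd h1 (by decide)
  · exact absurd h2 (by decide)
  · have hk := k.isLt
    rw [show ((2 : Fin 6) : ℕ) = 2 from rfl] at h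
    refine ⟨rfl, ?_⟩
    rcases h with h | h
    · exact Or.inr (Fin.ext (show (k : ℕ) = 3 by omega))
    · exact Or.inl (Fin.ext (show (k : ℕ) = 1 by omega))

lemma nbr3 {v w : V} {k : Fin 6} (he : E' (v, 3) (w, k)) :
    v = w ∧ (k = 2 ∨ k = 4) := by
  rcases nbr hE' he with ⟨h1, h2, h3⟩ | ⟨h1, h2, h3⟩ | ⟨rfl, h⟩
  · exact absurd h1 (by decide)
  · exact absurd h2 (by decide)
  · have hk := k.isLt
    rw [show ((3 : Fin 6) : ℕ) = 3 from rfl] at h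
    refine ⟨rfl, ?_⟩
    rcases h with h | h
    · exact Or.inr (Fin.ext (show (k : ℕ) = 4 by omega))
    · exact Or.inl (Fin.ext (show (k : ℕ) = 2 by omega))

lemma nbr4 {v w : V} {k : Fin 6} (he : E' (v, 4) (w, k)) :
    v = w ∧ (k = 3 ∨ k = 5) := by
  rcases nbr hE' he with ⟨h1, h2, h3⟩ | ⟨h1, h2, h3⟩ | ⟨rfl, h⟩
  · exact absurd h1 (by decide)
  · exact absurd h2 (by decide)
  · have hk := k.isLt
    rw [show ((4 : Fin 6) : ℕ) = 4 from rfl] at h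
    refine ⟨rfl, ?_⟩
    rcases h with h | h
    · exact Or.inr (Fin.ext (show (k : ℕ) = 5 by omega))
    · exact Or.inl (Fin.ext (show (k : ℕ) = 3 by omega))

lemma nbr5 {v w : V} {k : Fin 6} (he : E' (v, 5) (w, k)) :
    (v = w ∧ k = 4) ∨ (k = 0 ∧ E v w) := by
  rcases nbr hE' he with ⟨h1, h2, h3⟩ | ⟨h1, h2, h3⟩ | ⟨rfl, h⟩
  · exact Or.inr ⟨h2, h3⟩
  · exact absurd h2 (by decide)
  · have hk := k.isLt
    rw [show ((5 : Fin 6) : ℕ) = 5 from rfl] at h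
    exact Or.inl ⟨rfl, Fin.ext (show (k : ℕ) = 4 by omega)⟩

variable {c : V → ℕ} {c'' : V × Fin 6 → ℕ}
    (hc'' : ∀ v : V, c'' (v, 0) = 1 ∧ c'' (v, 1) = 2 ∧ c'' (v, 2) = c v ∧
      c'' (v, 3) = 2 ∧ c'' (v, 4) = 2 ∧ c'' (v, 5) = 1)

include hc''

lemma fwd_block {x y : V} (h : E x y) :
    NodeColoredWalk E' c'' (x, 5) (y, 5) [1, 2, c y, 2, 2, 1] := by
  refine NodeColoredWalk.cons (v := (y, 0)) ((hE' _ _).2 (.inl ⟨rfl, rfl, h⟩)) (hc'' y).1 ?_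
  refine NodeColoredWalk.cons (v := (y, 1))
    ((hE' _ _).2 (.inr (.inr ⟨rfl, .inl rfl⟩))) (hc'' y).2.1 ?_
  refine NodeColoredWalk.cons (v := (y, 2))
    ((hE' _ _).2 (.inr (.inr ⟨rfl, .inl rfl⟩))) (hc'' y).2.2.1 ?_
  refine NodeColoredWalk.cons (v := (y, 3))
    ((hE' _ _).2 (.inr (.inr ⟨rfl, .inl rfl⟩))) (hc'' y).2.2.2.1 ?_
  refine NodeColoredWalk.cons (v := (y, 4))
    ((hE' _ _).2 (.inr (.inr ⟨rfl, .inl rfl⟩))) (hc'' y).2.2.2.2.1 ?_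
  exact NodeColoredWalk.cons (v := (y, 5))
    ((hE' _ _).2 (.inr (.inr ⟨rfl, .inl rfl⟩))) (hc'' y).2.2.2.2.2 (.nil _)

lemma back_block {v : V} {q : V × Fin 6} {γ : ℕ} {rest : List ℕ}
    (h : NodeColoredWalk E' c'' (v, 5) q (1 :: 2 :: γ :: 2 :: 2 :: 1 :: rest)) :
    ∃ w, E v w ∧ c w = γ ∧ NodeColoredWalk E' c'' (w, 5) q rest := by
  -- step 1 : color 1, must go to some (w, 0) with E v w
  obtain ⟨⟨w, k⟩, he, hcol, h⟩ := ncw_cons_inv h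
  rcases nbr5 hE' he with ⟨rfl, rfl⟩ | ⟨rfl, hEvw⟩
  · have := (hc'' v).2.2.2.2.1; omega
  -- step 2 : color 2, must go to (w, 1)
  obtain ⟨⟨w1, k⟩, he, hcol, h⟩ := ncw_cons_inv h
  rcases nbr0 hE' he with ⟨rfl, rfl⟩ | ⟨rfl, _⟩
  swap
  · have := (hc'' w1).2.2.2.2.2; omega
  -- step 3 : color γ, goes to (w, 0) or (w, 2)
  obtain ⟨⟨w2, k⟩, he, hcol, h⟩ := ncw_cons_inv h
  obtain ⟨rfl, rfl | rfl⟩ := nbr1 hE' he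
  · -- back at (w, 0); this branch dies within the next three steps
    exfalso
    -- step 4 : color 2 from (w, 0) → (w, 1)
    obtain ⟨⟨w3, k⟩, he, hcol4, h⟩ := ncw_cons_inv h
    rcases nbr0 hE' he with ⟨rfl, rfl⟩ | ⟨rfl, _⟩
    swap
    · have := (hc'' w3).2.2.2.2.2; omega
    -- step 5 : color 2 from (w, 1) → (w, 0) (color 1, contra) or (w, 2)
    obtain ⟨⟨w4, k⟩, he, hcol5, h⟩ := ncw_cons_inv h
    obtain ⟨rfl, rfl | rfl⟩ := nbr1 hE' he
    · have := (hc'' w).1; omega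
    -- step 6 : color 1 from (w, 2): both neighbors have color 2, contra
    obtain ⟨⟨w5, k⟩, he, hcol6, h⟩ := ncw_cons_inv h
    obtain ⟨rfl, rfl | rfl⟩ := nbr2 hE' he
    · have := (hc'' w).2.1; omega
    · have := (hc'' w).2.2.2.1; omega
  · -- at (w, 2), and c'' (w,2) = γ, i.e. c w = γ
    have hcw : c w = γ := by have := (hc'' w).2.2.1; omega
    -- step 4 : color 2 from (w, 2) → (w, 1) or (w, 3)
    obtain ⟨⟨w3, k⟩, he, hcol4, h⟩ := ncw_cons_inv h
    obtain ⟨rfl, rfl | rfl⟩ := nbr2 hE' he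
    · -- at (w, 1)
      exfalso
      -- step 5 : color 2 from (w, 1) → (w, 0) (color 1, contra) or (w, 2)
      obtain ⟨⟨w4, k⟩, he, hcol5, h⟩ := ncw_cons_inv h
      obtain ⟨rfl, rfl | rfl⟩ := nbr1 hE' he
      · have := (hc'' w).1; omega
      -- step 6 : color 1 from (w, 2): contra
      obtain ⟨⟨w5, k⟩, he, hcol6, h⟩ := ncw_cons_inv h
      obtain ⟨rfl, rfl | rfl⟩ := nbr2 hE' he
      · have := (hc'' w).2.1; omega
      · have := (hc'' w).2.2.2.1; omega
    · -- at (w, 3)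
      -- step 5 : color 2 from (w, 3) → (w, 2) or (w, 4)
      obtain ⟨⟨w4, k⟩, he, hcol5, h⟩ := ncw_cons_inv h
      obtain ⟨rfl, rfl | rfl⟩ := nbr3 hE' he
      · -- at (w, 2): step 6, color 1, contra
        exfalso
        obtain ⟨⟨w5, k⟩, he, hcol6, h⟩ := ncw_cons_inv h
        obtain ⟨rfl, rfl | rfl⟩ := nbr2 hE' he
        · have := (hc'' w).2.1; omega
        · have := (hc'' w).2.2.2.1; omega
      · -- at (w, 4): step 6, color 1 → (w, 5)
        obtain ⟨⟨w5, k⟩, he, hcol6, h⟩ := ncw_cons_inv h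
        obtain ⟨rfl, rfl | rfl⟩ := nbr4 hE' he
        · have := (hc'' w).2.2.2.1; omega
        · exact ⟨w, hEvw, hcw, h⟩

lemma back (t : V) : ∀ (cs : List ℕ) (s : V),
    NodeColoredWalk E' c'' (s, 5) (t, 5) (cs.flatMap fun γ => [1, 2, γ, 2, 2, 1]) →
    NodeColoredWalk E c s t cs := by
  intro cs
  induction cs with
  | nil =>
    intro s h
    simp only [List.flatMap_nil] at h
    have := ncw_nil_inv h
    obtain rfl : s = t := congrArg Prod.fst this
    exact .nil _
  | cons γ cs ih =>
    intro s h
    simp only [List.flatMap_cons, List.cons_append, List.nil_append] at h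
    obtain ⟨w, hEw, hcw, h⟩ := back_block hE' hc'' h
    exact .cons hEw hcw (ih w h)

end Gadget9

/-- Let `G = (V, E)` be a directed graph with node coloring
`c : V → {1,2}` and let `G'` with node coloring `c''` be the undirected gadget graph:
for each `v ∈ V` the six vertices `v_in = (v,0), v^(1) = (v,1), …, v_out = (v,5)`,
path edges `{v_in, v^(1)}, …, {v^(4), v_out}`, cross edges `{u_out, v_in}` for every
`(u, v) ∈ E`; `c'' v_in = c'' v_out = 1` and `(c'' v^(1), …, c'' v^(4)) =
(2, c v, 2, 2)`. Writing `col γ := (2, γ, 2, 2, 1)`, for all `s, t ∈ V`, `ℓ ≥ 1` and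
`c₁, …, c_ℓ ∈ {1,2}`: there is a walk of length `ℓ` from `s` to `t` in `G` with node
color sequence `c₁, …, c_ℓ` iff there is a walk of length `6ℓ` from `s_out` to
`t_out` in `G'` with node color sequence `1, col c₁, 1, col c₂, …, 1, col c_ℓ`. -/
theorem directed_node2_to_undirected_node2 {V : Type*} (E : V → V → Prop)
    (c : V → ℕ) (hc : ∀ v, c v = 1 ∨ c v = 2)
    (E' : V × Fin 6 → V × Fin 6 → Prop)
    (hE' : ∀ p q, E' p q ↔
      ((p.2 = (5 : Fin 6) ∧ q.2 = 0 ∧ E p.1 q.1) ∨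
       (q.2 = (5 : Fin 6) ∧ p.2 = 0 ∧ E q.1 p.1) ∨
       (p.1 = q.1 ∧ ((q.2 : ℕ) = (p.2 : ℕ) + 1 ∨ (p.2 : ℕ) = (q.2 : ℕ) + 1))))
    (c'' : V × Fin 6 → ℕ)
    (hc'' : ∀ v : V, c'' (v, 0) = 1 ∧ c'' (v, 1) = 2 ∧ c'' (v, 2) = c v ∧
      c'' (v, 3) = 2 ∧ c'' (v, 4) = 2 ∧ c'' (v, 5) = 1)
    (s t : V) (cs : List ℕ) (hcs : ∀ γ ∈ cs, γ = 1 ∨ γ = 2) (hne : cs ≠ []) :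
    NodeColoredWalk E c s t cs ↔
      NodeColoredWalk E' c'' (s, 5) (t, 5)
        (cs.flatMap fun γ => [1, 2, γ, 2, 2, 1]) := by
  constructor
  · intro h
    clear hcs hne
    induction h with
    | nil v => simpa using NodeColoredWalk.nil (E := E') (c := c'') (v, 5)
    | cons he hcv hw ih =>
      rw [List.flatMap_cons]
      exact Gadget9.ncw_append (by rw [← hcv]; exact Gadget9.fwd_block hE' hc'' he) ih
  · exact Gadget9.back hE' hc'' t cs s
end

section
/- Let G=(V,E) be a directed graph with V={1,…,n}, edge coloring c:E→{1,2}, vertices s,t∈V, ℓ≥1 and colors c₁,…,c_ℓ∈{1,2}. Over the alphabet {0,1,2}, define the string S := 0^s c₁ 0^n c₂ 0^n c₃ … 0^n c_{ℓ−1} 0^n c_ℓ 0^{n−t} (where 0^k denotes k repetitions of the symbol 0) and the dictionary D := { 0^u c(u,v) 0^{n−v} : (u,v)∈E }. Then S can be partitioned into dictionary words, i.e., S is the concatenation of finitely many strings each belonging to D (equivalently, S lies in the Kleene star of the language D), if and only if there exists a walk of length ℓ from s to t in G whose edge color sequence under c is c₁,…,c_ℓ. -/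
/-- Auxiliary: the tail of the target string after the first color symbol. -/
def wbH (n t : ℕ) : List (Fin 3) → List (Fin 3)
  | [] => List.replicate (n - t) 0
  | γ :: cs => List.replicate n 0 ++ γ :: wbH n t cs

lemma wb_inter_eq (n t : ℕ) :
    ∀ (cs : List (Fin 3)) (γ : Fin 3),
      List.intercalate (List.replicate n (0 : Fin 3)) ((γ :: cs).map fun γ => [γ]) ++
        List.replicate (n - t) (0 : Fin 3) = γ :: wbH n t cs := by
  intro cs
  induction cs with
  | nil => intro γ; simp [List.intercalate, wbH]
  | cons γ' cs ih =>
      intro γ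
      have h : List.intercalate (List.replicate n (0 : Fin 3))
          ((γ :: γ' :: cs).map fun γ => [γ]) =
          [γ] ++ List.replicate n 0 ++
            List.intercalate (List.replicate n (0 : Fin 3)) ((γ' :: cs).map fun γ => [γ]) := by
        simp [List.intercalate, List.intersperse]
      rw [h, wbH, List.append_assoc, List.append_assoc, ih γ']
      simp

lemma repl_split {α : Type*} {z a b : α} (ha : a ≠ z) (hb : b ≠ z) :
    ∀ {u s : ℕ} {X Y : List α},
      List.replicate u z ++ a :: X = List.replicate s z ++ b :: Y →
      u = s ∧ a = b ∧ X = Y := by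
  intro u
  induction u with
  | zero =>
      intro s X Y h
      cases s with
      | zero => simpa using h
      | succ s =>
          rw [List.replicate_succ, List.replicate_zero] at h
          simp only [List.nil_append, List.cons_append, List.cons.injEq] at h
          exact absurd h.1 ha
  | succ u ih =>
      intro s X Y h
      cases s with
      | zero =>
          rw [List.replicate_succ, List.replicate_zero] at h
          simp only [List.nil_append, List.cons_append, List.cons.injEq] at h
          exact absurd h.1.symm hb
      | succ s =>
          rw [List.replicate_succ, List.replicate_succ] at h
          simp only [List.cons_append, List.cons.injEq] at h
          obtain ⟨h1, h2, h3⟩ := ih h.2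
          exact ⟨by omega, h2, h3⟩

/-- Let `G = (V, E)` be a directed graph on `V = {1, …, n}` with edge
coloring `c : E → {1,2}`, `s, t ∈ V`, `ℓ ≥ 1` and `c₁, …, c_ℓ ∈ {1,2}`. Over the
alphabet `{0,1,2}` (modeled by `Fin 3`), define the string
`S := 0^s c₁ 0^n c₂ 0^n … 0^n c_ℓ 0^{n-t}` and the dictionary
`D := {0^u c(u,v) 0^{n-v} : (u,v) ∈ E}`. Then `S` can be partitioned into dictionary
words (i.e., `S` is the concatenation of finitely many strings from `D`; equivalently
`S` lies in the Kleene star of `D`) iff there is a walk of length `ℓ` from `s` to `t`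
in `G` with edge color sequence `c₁, …, c_ℓ`. -/
theorem word_break_reduction (n : ℕ) (E : ℕ → ℕ → Prop)
    (hE : ∀ u v, E u v → 1 ≤ u ∧ u ≤ n ∧ 1 ≤ v ∧ v ≤ n)
    (c : ℕ → ℕ → Fin 3) (hc : ∀ u v, E u v → c u v = 1 ∨ c u v = 2)
    (s t : ℕ) (hs : 1 ≤ s ∧ s ≤ n) (ht : 1 ≤ t ∧ t ≤ n)
    (cs : List (Fin 3)) (hcs : ∀ γ ∈ cs, γ = 1 ∨ γ = 2) (hne : cs ≠ []) :
    (∃ ws : List (List (Fin 3)),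
      (∀ w ∈ ws, ∃ u v, E u v ∧
        w = List.replicate u (0 : Fin 3) ++ c u v :: List.replicate (n - v) (0 : Fin 3)) ∧
      ws.flatten = List.replicate s (0 : Fin 3) ++
        List.intercalate (List.replicate n (0 : Fin 3)) (cs.map fun γ => [γ]) ++
        List.replicate (n - t) (0 : Fin 3)) ↔
      EdgeColoredWalk E c s t cs := by
  obtain ⟨γ, cs', rfl⟩ : ∃ γ cs', cs = γ :: cs' := by
    cases cs with
    | nil => exact absurd rfl hne
    | cons γ cs' => exact ⟨γ, cs', rfl⟩
  -- rewrite the target string using `wbH`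
  have hS : List.replicate s (0 : Fin 3) ++
      List.intercalate (List.replicate n (0 : Fin 3)) ((γ :: cs').map fun γ => [γ]) ++
      List.replicate (n - t) (0 : Fin 3) =
      List.replicate s (0 : Fin 3) ++ γ :: wbH n t cs' := by
    rw [List.append_assoc, wb_inter_eq]
  rw [hS]
  constructor
  · -- forward direction
    clear hne hS
    rintro ⟨ws, hws, hflat⟩
    induction cs' generalizing γ s ws with
    | nil =>
        cases ws with
        | nil =>
            exfalso
            have := congrArg List.length hflat
            simp [wbH] at this
        | cons w ws' =>
            obtain ⟨u, v, huv, rfl⟩ := hws _ List.mem_cons_self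
            have hcu : c u v ≠ 0 := by
              rcases hc u v huv with h | h <;> simp [h]
            have hγ : γ ≠ 0 := by
              rcases hcs γ (by simp) with h | h <;> simp [h]
            rw [List.flatten_cons, List.append_assoc, List.cons_append] at hflat
            obtain ⟨hus, hcγ, htail⟩ := repl_split hcu hγ hflat
            -- tail : replicate (n - v) 0 ++ ws'.flatten = wbH n t []
            rw [wbH] at htail
            have hws'nil : ws' = [] := by
              cases ws' with
              | nil => rfl
              | cons w' ws'' =>
                  exfalso
                  obtain ⟨u', v', huv', hw'eq⟩ := hws w' (by simp)
                  subst hw'eq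
                  have hcu' : c u' v' ≠ 0 := by
                    rcases hc u' v' huv' with h | h <;> simp [h]
                  apply hcu'
                  have hmem : c u' v' ∈ List.replicate (n - v) (0 : Fin 3) ++
                      (List.flatten ((List.replicate u' (0:Fin 3) ++
                        c u' v' :: List.replicate (n - v') (0:Fin 3)) :: ws'')) := by
                    simp
                  rw [htail] at hmem
                  exact List.eq_of_mem_replicate hmem
            subst hws'nil
            simp only [List.flatten_nil, List.append_nil] at htail
            have hlen := congrArg List.length htail
            simp at hlen
            obtain ⟨_, _, hv1, hv2⟩ := hE u v huv
            have hvt : v = t := by omega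
            subst hus; subst hvt
            exact EdgeColoredWalk.cons huv hcγ (EdgeColoredWalk.nil _)
    | cons γ' cs'' ih =>
        cases ws with
        | nil =>
            exfalso
            have := congrArg List.length hflat
            simp [wbH] at this
        | cons w ws' =>
            obtain ⟨u, v, huv, rfl⟩ := hws _ List.mem_cons_self
            have hcu : c u v ≠ 0 := by
              rcases hc u v huv with h | h <;> simp [h]
            have hγ : γ ≠ 0 := by
              rcases hcs γ (by simp) with h | h <;> simp [h]
            rw [List.flatten_cons, List.append_assoc, List.cons_append] at hflat
            obtain ⟨hus, hcγ, htail⟩ := repl_split hcu hγ hflat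
            rw [wbH] at htail
            obtain ⟨_, _, hv1, hv2⟩ := hE u v huv
            have hsplit : List.replicate n (0 : Fin 3) =
                List.replicate (n - v) (0 : Fin 3) ++ List.replicate v (0 : Fin 3) := by
              rw [← List.replicate_add]
              congr 1
              omega
            rw [hsplit, List.append_assoc] at htail
            have htail' : ws'.flatten =
                List.replicate v (0 : Fin 3) ++ γ' :: wbH n t cs'' :=
              List.append_cancel_left htail
            have hwalk : EdgeColoredWalk E c v t (γ' :: cs'') := by
              refine ih v ⟨hv1, hv2⟩ γ' (fun γ'' h => hcs γ'' (List.mem_cons_of_mem _ h))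
                ws' (fun w hw => hws w (List.mem_cons_of_mem _ hw)) htail'
            subst hus
            exact EdgeColoredWalk.cons huv hcγ hwalk
  · -- backward direction
    intro hwalk
    clear hS hne
    -- generalize: walk from u gives a partition of the corresponding string
    suffices h : ∀ (u : ℕ) (l : List (Fin 3)), EdgeColoredWalk E c u t l →
        ∃ ws : List (List (Fin 3)),
          (∀ w ∈ ws, ∃ u' v', E u' v' ∧
            w = List.replicate u' (0 : Fin 3) ++
              c u' v' :: List.replicate (n - v') (0 : Fin 3)) ∧
          ws.flatten = (match l with
            | [] => ([] : List (Fin 3))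
            | γ :: l' => List.replicate u (0 : Fin 3) ++ γ :: wbH n t l') by
      obtain ⟨ws, h1, h2⟩ := h s (γ :: cs') hwalk
      exact ⟨ws, h1, h2⟩
    clear hwalk hcs hs ht hc
    clear s γ cs'
    intro u l hw
    induction hw with
    | nil v => exact ⟨[], by simp, rfl⟩
    | @cons u' v' w' a l' he hce hw' ih =>
        obtain ⟨ws', h1, h2⟩ := ih
        refine ⟨(List.replicate u' (0 : Fin 3) ++
            c u' v' :: List.replicate (n - v') (0 : Fin 3)) :: ws', ?_, ?_⟩
        · intro w hwmem
          rcases List.mem_cons.mp hwmem with h | h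
          · exact ⟨u', v', he, h⟩
          · exact h1 w h
        · obtain ⟨_, _, hv1, hv2⟩ := hE u' v' he
          cases l' with
          | nil =>
              cases hw' with
              | nil =>
                  simp only at h2
                  simp [List.flatten_cons, h2, hce, wbH]
          | cons γ'' l'' =>
              simp only at h2
              rw [List.flatten_cons, h2, hce]
              simp only [wbH, List.cons_append, List.append_assoc]
              congr 2
              rw [← List.append_assoc, ← List.replicate_add]
              congr 2
              omega
end

section
/- Let A={a₁,…,a_n}⊆{0,1}^d and B={b₁,…,b_ℓ}⊆{0,1}^d. Define the NFA M over Σ={0,1,2} with state set {s,t}∪{q^(i)_k : 1≤i≤n, 0≤k≤d}, initial state s, accepting set {t}, and the following transitions: (q^(i)_{k−1},0,q^(i)_k) for all 1≤i≤n and 1≤k≤d; (q^(i)_{k−1},1,q^(i)_k) whenever a_i[k]=0; (s,2,q^(i)_0) and (q^(i)_d,2,t) for all 1≤i≤n; and the loops (s,0,s),(s,1,s),(s,2,s),(t,0,t),(t,1,t),(t,2,t). Define the string S := 2 b₁ 2 b₂ 2 … 2 b_ℓ 2, where each b_j is interpreted as a string of length d over {0,1}. Then M accepts S if and only if there exist i∈{1,…,n}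 and j∈{1,…,ℓ} such that a_i and b_j are orthogonal, i.e., for every 1≤k≤d we have a_i[k]=0 or b_j[k]=0. -/
inductive NFAAccepts {Q σ : Type*} (δ : Q → σ → Q → Prop) (F : Set Q) :
    Q → List σ → Prop
  | nil {q : Q} (h : q ∈ F) : NFAAccepts δ F q []
  | cons {q q' : Q} {a : σ} {x : List σ} (h : δ q a q')
      (hw : NFAAccepts δ F q' x) : NFAAccepts δ F q (a :: x)

namespace OVNFA

def Del (n d : ℕ) (a : Fin n → Fin d → Bool) :
    ((Fin n × ℕ) ⊕ Bool) → Fin 3 → ((Fin n × ℕ) ⊕ Bool) → Prop :=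
  fun p x q =>
    (∃ (i : Fin n) (k : ℕ) (hk : k < d), p = .inl (i, k) ∧ q = .inl (i, k + 1) ∧
      (x = 0 ∨ (x = 1 ∧ a i ⟨k, hk⟩ = false))) ∨
    (∃ i : Fin n, p = .inr false ∧ x = 2 ∧ q = .inl (i, 0)) ∨
    (∃ i : Fin n, p = .inl (i, d) ∧ x = 2 ∧ q = .inr true) ∨
    (∃ br : Bool, p = .inr br ∧ q = .inr br)

def Fset (n : ℕ) : Set ((Fin n × ℕ) ⊕ Bool) := {p | p = .inr true}

def bit (c : Bool) : Fin 3 := if c then 1 else 0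

lemma bit_ne_two (c : Bool) : bit c ≠ 2 := by cases c <;> decide

variable {n d : ℕ} (a : Fin n → Fin d → Bool)

lemma a_congr (i : Fin n) {x y : ℕ} (hx : x < d) (hy : y < d) (h : x = y) :
    a i ⟨x, hx⟩ = a i ⟨y, hy⟩ := by subst h; rfl

def blocks (L : List (Fin d → Bool)) : List (Fin 3) :=
  (L.map fun v => (List.ofFn v).map bit ++ [(2 : Fin 3)]).flatten

lemma blocks_cons (v : Fin d → Bool) (L : List (Fin d → Bool)) :
    blocks (v :: L) = (List.ofFn v).map bit ++ 2 :: blocks L := by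
  simp [blocks]

lemma t_acc (x : List (Fin 3)) : NFAAccepts (Del n d a) (Fset n) (.inr true) x := by
  induction x with
  | nil => exact .nil rfl
  | cons c x ih => exact .cons (Or.inr (Or.inr (Or.inr ⟨true, rfl, rfl⟩))) ih

lemma loop_prefix (br : Bool) (y x : List (Fin 3))
    (h : NFAAccepts (Del n d a) (Fset n) (.inr br) x) :
    NFAAccepts (Del n d a) (Fset n) (.inr br) (y ++ x) := by
  induction y with
  | nil => exact h
  | cons c y ih => exact .cons (Or.inr (Or.inr (Or.inr ⟨br, rfl, rfl⟩))) ih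

lemma run_word (i : Fin n) :
    ∀ (w : List Bool) (k : ℕ) (hlen : k + w.length = d),
    (∀ m (hm : m < w.length), a i ⟨k + m, by omega⟩ = false ∨ w.get ⟨m, hm⟩ = false) →
    ∀ rest, NFAAccepts (Del n d a) (Fset n) (.inr true) rest →
    NFAAccepts (Del n d a) (Fset n) (.inl (i, k)) (w.map bit ++ 2 :: rest) := by
  intro w
  induction w with
  | nil =>
    intro k hlen _ rest hrest
    subst hlen
    simp only [List.length_nil, Nat.add_zero] at *
    exact .cons (Or.inr (Or.inr (Or.inl ⟨i, rfl, rfl, rfl⟩))) hrest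
  | cons c w ih =>
    intro k hlen horth rest hrest
    have hk : k < d := by simp at hlen; omega
    have step : Del n d a (.inl (i, k)) (bit c) (.inl (i, k + 1)) := by
      refine Or.inl ⟨i, k, hk, rfl, rfl, ?_⟩
      cases c with
      | false => exact Or.inl rfl
      | true =>
        refine Or.inr ⟨rfl, ?_⟩
        have h2 := horth 0 (by simp)
        rcases h2 with h2 | h2
        · exact (a_congr a i _ _ (by omega)).trans h2
        · simp at h2
    have tail := ih (k + 1) (by simp at hlen ⊢; omega) (fun m hm => by
      have h2 := horth (m + 1) (by simpa using Nat.succ_lt_succ hm)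
      rcases h2 with h2 | h2
      · left
        exact (a_congr a i _ _ (by omega)).trans h2
      · right
        simpa using h2) rest hrest
    exact .cons step tail

lemma fwd_word (i : Fin n) :
    ∀ (w : List Bool) (k : ℕ) (x : List (Fin 3)),
    NFAAccepts (Del n d a) (Fset n) (.inl (i, k)) (w.map bit ++ x) →
    ∀ m (hm : m < w.length) (hkd : k + m < d),
      a i ⟨k + m, hkd⟩ = false ∨ w.get ⟨m, hm⟩ = false := by
  intro w
  induction w with
  | nil => intro k x h m hm; simp at hm
  | cons c w ih =>
    intro k x h m hm hkd
    cases h with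
    | cons t hw =>
      rcases t with ⟨i', k', hk', hp, hq, hx⟩ | ⟨i', hp, hx, hq⟩ | ⟨i', hp, hx, hq⟩ | ⟨br, hp, hq⟩
      · have hii : i = i' ∧ k = k' := by
          simp at hp; exact ⟨hp.1, hp.2⟩
        obtain ⟨rfl, rfl⟩ := hii
        subst hq
        cases m with
        | zero =>
          cases c with
          | false => right; simp
          | true =>
            left
            rcases hx with hx | ⟨_, ha⟩
            · exact absurd hx (by decide)
            · exact (a_congr a i _ _ (by omega)).trans ha
        | succ m =>
          have := ih (k + 1) x hw m (by simpa using Nat.succ_lt_succ_iff.mp hm)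
            (by omega)
          rcases this with h2 | h2
          · left; exact (a_congr a i _ _ (by omega)).trans h2
          · right; simpa using h2
      · simp at hp
      · exact absurd hx (bit_ne_two c)
      · simp at hp

lemma fwd_s_bits :
    ∀ (w : List Bool) (x : List (Fin 3)),
    NFAAccepts (Del n d a) (Fset n) (.inr false) (w.map bit ++ x) →
    NFAAccepts (Del n d a) (Fset n) (.inr false) x := by
  intro w
  induction w with
  | nil => intro x h; exact h
  | cons c w ih =>
    intro x h
    cases h with
    | cons t hw =>
      rcases t with ⟨i', k', hk', hp, hq, hx⟩ | ⟨i', hp, hx, hq⟩ | ⟨i', hp, hx, hq⟩ | ⟨br, hp, hq⟩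
      · simp at hp
      · exact absurd hx (bit_ne_two c)
      · simp at hp
      · have : br = false := by simpa using hp.symm
        subst this; subst hq
        exact ih x hw

lemma fwd_from_q0 (i : Fin n) (L : List (Fin d → Bool))
    (h : NFAAccepts (Del n d a) (Fset n) (.inl (i, 0)) (blocks L)) :
    ∃ v ∈ L, ∀ k : Fin d, a i k = false ∨ v k = false := by
  cases L with
  | nil =>
    exfalso
    cases h with
    | nil h => simp [Fset] at h
  | cons v L =>
    rw [blocks_cons] at h
    refine ⟨v, List.mem_cons_self, fun k => ?_⟩
    have := fwd_word a i (List.ofFn v) 0 (2 :: blocks L) h k.val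
      (by simpa using k.isLt) (by simpa using k.isLt)
    rcases this with h2 | h2
    · left
      have : (⟨(0 : ℕ) + k.val, by simpa using k.isLt⟩ : Fin d) = k := by
        apply Fin.ext; simp
      rw [← this]; exact h2
    · right; simpa using h2

lemma fwd_blocks :
    ∀ (L : List (Fin d → Bool)),
    NFAAccepts (Del n d a) (Fset n) (.inr false) (2 :: blocks L) →
    ∃ (i : Fin n), ∃ v ∈ L, ∀ k : Fin d, a i k = false ∨ v k = false := by
  intro L
  induction L with
  | nil =>
    intro h
    exfalso
    cases h with
    | cons t hw =>
      rcases t with ⟨i', k', hk', hp, hq, hx⟩ | ⟨i', hp, hx, hq⟩ | ⟨i', hp, hx, hq⟩ | ⟨br, hp, hq⟩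
      · simp at hp
      · subst hq
        cases hw with
        | nil h => simp [Fset] at h
      · simp at hp
      · have : br = false := by simpa using hp.symm
        subst this; subst hq
        cases hw with
        | nil h => simp [Fset, blocks] at h
  | cons v L ih =>
    intro h
    cases h with
    | cons t hw =>
      rcases t with ⟨i', k', hk', hp, hq, hx⟩ | ⟨i', hp, hx, hq⟩ | ⟨i', hp, hx, hq⟩ | ⟨br, hp, hq⟩
      · simp at hp
      · subst hq
        obtain ⟨v', hv', horth⟩ := fwd_from_q0 a i' (v :: L) hw
        exact ⟨i', v', hv', horth⟩
      · simp at hp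
      · have : br = false := by simpa using hp.symm
        subst this; subst hq
        rw [blocks_cons] at hw
        have := fwd_s_bits a (List.ofFn v) _ hw
        obtain ⟨i, v', hv', horth⟩ := ih this
        exact ⟨i, v', List.mem_cons_of_mem _ hv', horth⟩

lemma bwd_blocks (i : Fin n) :
    ∀ (L : List (Fin d → Bool)) (v : Fin d → Bool), v ∈ L →
    (∀ k : Fin d, a i k = false ∨ v k = false) →
    NFAAccepts (Del n d a) (Fset n) (.inr false) (2 :: blocks L) := by
  intro L
  induction L with
  | nil => intro v hv; simp at hv
  | cons v' L ih =>
    intro v hv horth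
    rcases List.mem_cons.mp hv with rfl | hv
    · refine .cons (Or.inr (Or.inl ⟨i, rfl, rfl, rfl⟩)) ?_
      rw [blocks_cons]
      refine run_word a i (List.ofFn v) 0 (by simp) (fun m hm => ?_) (blocks L)
        (t_acc a _)
      have := horth ⟨m, by simpa using hm⟩
      rcases this with h2 | h2
      · left; exact (a_congr a i _ _ (by omega)).trans h2
      · right; simpa using h2
    · refine .cons (Or.inr (Or.inr (Or.inr ⟨false, rfl, rfl⟩))) ?_
      rw [blocks_cons]
      exact loop_prefix a false _ _ (ih v hv horth)

end OVNFA
/-- Let `A = {a₁, …, a_n} ⊆ {0,1}^d` and `B = {b₁, …, b_ℓ} ⊆ {0,1}^d`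
(vectors modeled as `Fin d → Bool`, entry `0` being `false`). Define the NFA `M` over
`Σ = {0,1,2}` (= `Fin 3`) with states `{s, t} ∪ {q^{(i)}_k : 1 ≤ i ≤ n, 0 ≤ k ≤ d}`
(modeled inside `(Fin n × ℕ) ⊕ Bool`, `s = Sum.inr false`, `t = Sum.inr true`,
`q^{(i)}_k = Sum.inl (i, k)`): transitions `(q^{(i)}_{k-1}, 0, q^{(i)}_k)` for all
`i, k`, `(q^{(i)}_{k-1}, 1, q^{(i)}_k)` whenever `a_i[k] = 0`, `(s, 2, q^{(i)}_0)`
and `(q^{(i)}_d, 2, t)` for all `i`, and loops on `s` and `t` for every symbol.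
Then `M` accepts the string `S := 2 b₁ 2 b₂ 2 … 2 b_ℓ 2` iff there are `i, j` such
that `a_i` and `b_j` are orthogonal. -/
theorem ov_to_nfa_acceptance (n d ℓ : ℕ)
    (a : Fin n → Fin d → Bool) (b : Fin ℓ → Fin d → Bool) :
    NFAAccepts
        (fun (p : (Fin n × ℕ) ⊕ Bool) (x : Fin 3) (q : (Fin n × ℕ) ⊕ Bool) =>
          (∃ (i : Fin n) (k : ℕ) (hk : k < d), p = .inl (i, k) ∧ q = .inl (i, k + 1) ∧
            (x = 0 ∨ (x = 1 ∧ a i ⟨k, hk⟩ = false))) ∨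
          (∃ i : Fin n, p = .inr false ∧ x = 2 ∧ q = .inl (i, 0)) ∨
          (∃ i : Fin n, p = .inl (i, d) ∧ x = 2 ∧ q = .inr true) ∨
          (∃ br : Bool, p = .inr br ∧ q = .inr br))
        {p : (Fin n × ℕ) ⊕ Bool | p = .inr true} (.inr false)
        ((2 : Fin 3) ::
          (List.ofFn fun j : Fin ℓ =>
            (List.ofFn fun k : Fin d => if b j k then (1 : Fin 3) else 0) ++
              [(2 : Fin 3)]).flatten) ↔
      ∃ (i : Fin n) (j : Fin ℓ), ∀ k : Fin d, a i k = false ∨ b j k = false := by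
  have hstr : ((List.ofFn fun j : Fin ℓ =>
      (List.ofFn fun k : Fin d => if b j k then (1 : Fin 3) else 0) ++
        [(2 : Fin 3)]).flatten) = OVNFA.blocks (List.ofFn b) := by
    simp only [OVNFA.blocks, List.map_ofFn]
    congr 1
  rw [hstr]
  show NFAAccepts (OVNFA.Del n d a) (OVNFA.Fset n) (.inr false)
      (2 :: OVNFA.blocks (List.ofFn b)) ↔ _
  constructor
  · intro h
    obtain ⟨i, v, hv, horth⟩ := OVNFA.fwd_blocks a _ h
    obtain ⟨j, rfl⟩ := List.mem_ofFn.mp hv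
    exact ⟨i, j, horth⟩
  · rintro ⟨i, j, horth⟩
    exact OVNFA.bwd_blocks a i _ (b j) ((List.mem_ofFn.mpr ⟨j, rfl⟩)) horth
end

section
/- Let G be an undirected graph on vertex set V={0,…,n−1} with n≥2, let B:=⌈log₂ n⌉, and for v∈V let ID(v)∈{0,1}^B denote the B-bit binary representation of v. Suppose for each u∈V that N(u) is an NFA over {0,1} with a single start state and a single accepting state whose accepted language is exactly {ID(v) : {u,v}∈E}. For vertices u₁,…,u_k∈V and an integer k'≥1, let CG(u₁,…,u_k) be the serial connection of the sequence of NFAs N(u₁),N(u₂),…,N(u_k) repeated k' times, where the serial connection of a sequence of NFAs is formed by identifying the accepting state of each NFA with the start state of the next, the start state of the first NFA being the start state and the accepting state of the last NFA the unique accepting state. Then for all v₁,…,v_{k'}∈V: CG(u₁,…,u_k) accepts the string ID(v₁)^k ID(v₂)^k … ID(v_{k'})^k (each ID(v_j) repeated k times, concatenated) if and only if {u_i,v_j}∈E for every 1≤i≤k and 1≤j≤k'. -/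
/-- The equivalence relation generated by a relation `r`. -/
inductive IdentGen {α : Type*} (r : α → α → Prop) : α → α → Prop
  | rel {x y : α} : r x y → IdentGen r x y
  | refl (x : α) : IdentGen r x x
  | symm {x y : α} : IdentGen r x y → IdentGen r y x
  | trans {x y z : α} : IdentGen r x y → IdentGen r y z → IdentGen r x z

/-- The vertex of `G` whose NFA is the `j`-th automaton (0-indexed) in the serial
connection of the sequence `N(u 0), …, N(u (k-1))` repeated `k'` times. -/
def stageVertex {n k : ℕ} (hk : 0 < k) (u : Fin k → Fin n) (j : ℕ) : Fin n :=
  u ⟨j % k, Nat.mod_lt j hk⟩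

/-- For the serial connection of `m` automata (whose states are modeled as pairs
`(index of automaton in the sequence, state)`), the identification of the accepting
state of each automaton with the start state of the next one. -/
def identRel {Q : Type*} {n k : ℕ} (hk : 0 < k) (u : Fin k → Fin n)
    (st acc : Fin n → Q) (m : ℕ) : ℕ × Q → ℕ × Q → Prop :=
  fun p q => q.1 = p.1 + 1 ∧ q.1 < m ∧ p.2 = acc (stageVertex hk u p.1) ∧
    q.2 = st (stageVertex hk u q.1)

/-- The transition relation of the serial connection: the quotient by the
identification is modeled by saturating the stage transitions under the generated
equivalence `IdentGen (identRel …)`. -/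
def serialδ {Q : Type*} {n k : ℕ} (hk : 0 < k) (u : Fin k → Fin n)
    (st acc : Fin n → Q) (m : ℕ) (δ : Fin n → Q → Bool → Q → Prop) :
    ℕ × Q → Bool → ℕ × Q → Prop :=
  fun p x q => ∃ (j : ℕ) (q₁ q₂ : Q), j < m ∧
    IdentGen (identRel hk u st acc m) p (j, q₁) ∧
    δ (stageVertex hk u j) q₁ x q₂ ∧
    IdentGen (identRel hk u st acc m) (j, q₂) q

/-- `binID n v` : the `B`-bit binary representation of the vertex `v ∈ {0, …, n-1}`,
where `B := ⌈log₂ n⌉`. -/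
def binID (n : ℕ) (v : Fin n) : List Bool :=
  List.ofFn fun i : Fin (Nat.clog 2 n) => Nat.testBit (v : ℕ) (i : ℕ)


section CGAux

variable {Q : Type*} {n k : ℕ} (hk : 0 < k) (u : Fin k → Fin n)
  (st acc : Fin n → Q) (m : ℕ) (δ : Fin n → Q → Bool → Q → Prop)

private lemma nfa_compose {S σ : Type*} {d : S → σ → S → Prop} {F₁ F₂ : Set S} {q : S}
    {w₁ w₂ : List σ} (h₁ : NFAAccepts d F₁ q w₁)
    (h₂ : ∀ q' ∈ F₁, NFAAccepts d F₂ q' w₂) :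
    NFAAccepts d F₂ q (w₁ ++ w₂) := by
  induction h₁ with
  | nil h => exact h₂ _ h
  | cons h hw ih => exact .cons h ih

private lemma identRel_iff {a b : ℕ} {x y : Q} :
    identRel hk u st acc m (a, x) (b, y) ↔
      b = a + 1 ∧ b < m ∧ x = acc (stageVertex hk u a) ∧ y = st (stageVertex hk u b) :=
  Iff.rfl

private lemma ident_cases (hSA : ∀ x : Fin n, st x ≠ acc x) {p q : ℕ × Q}
    (h : IdentGen (identRel hk u st acc m) p q) :
    p = q ∨ identRel hk u st acc m p q ∨ identRel hk u st acc m q p := by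
  induction h with
  | rel h => exact .inr (.inl h)
  | refl x => exact .inl rfl
  | symm h ih =>
    rcases ih with h | h | h
    · exact .inl h.symm
    · exact .inr (.inr h)
    · exact .inr (.inl h)
  | @trans x y z h₁ h₂ ih₁ ih₂ =>
    rcases ih₁ with rfl | h1 | h1
    · exact ih₂
    · rcases ih₂ with rfl | h2 | h2
      · exact .inr (.inl h1)
      · exact absurd (h1.2.2.2.symm.trans h2.2.2.1) (hSA _)
      · left
        obtain ⟨e1, _, e3, e4⟩ := h1
        obtain ⟨f1, _, f3, f4⟩ := h2
        have hfst : x.1 = z.1 := by omega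
        exact Prod.ext hfst (by rw [e3, f3, hfst])
    · rcases ih₂ with rfl | h2 | h2
      · exact .inr (.inr h1)
      · left
        obtain ⟨e1, _, e3, e4⟩ := h1
        obtain ⟨f1, _, f3, f4⟩ := h2
        have hfst : x.1 = z.1 := by omega
        exact Prod.ext hfst (by rw [e4, f4, hfst])
      · exact absurd (h2.2.2.2.symm.trans h1.2.2.1) (hSA _)

private lemma lift_run {j : ℕ} (hj : j < m) {q r : Q} {w : List Bool}
    (h : NFAAccepts (δ (stageVertex hk u j)) {r} q w) :
    ∀ p, IdentGen (identRel hk u st acc m) p (j, q) →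
      NFAAccepts (serialδ hk u st acc m δ)
        {p' | IdentGen (identRel hk u st acc m) p' (j, r)} p w := by
  induction h with
  | @nil q hq =>
    intro p hp
    simp only [Set.mem_singleton_iff] at hq
    subst hq
    exact .nil hp
  | @cons q q' a x h hw ih =>
    intro p hp
    exact .cons ⟨j, q, q', hj, hp, h, .refl _⟩ (ih _ (.refl _))

private lemma accept_transport {F : Set (ℕ × Q)}
    (hF : ∀ p p', IdentGen (identRel hk u st acc m) p p' → p ∈ F → p' ∈ F)
    {p p' : ℕ × Q} (hpp : IdentGen (identRel hk u st acc m) p p')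
    {w : List Bool} (h : NFAAccepts (serialδ hk u st acc m δ) F p w) :
    NFAAccepts (serialδ hk u st acc m δ) F p' w := by
  cases h with
  | nil h => exact .nil (hF _ _ hpp h)
  | cons h hw =>
    obtain ⟨j, q₁, q₂, hj, h1, h2, h3⟩ := h
    exact .cons ⟨j, q₁, q₂, hj, .trans (.symm hpp) h1, h2, h3⟩ hw

inductive CGSegRun : ℕ → Q → List Bool → Prop
  | fin {j : ℕ} {q r : Q} {w : List Bool} (hj : j < m)
      (hr : IdentGen (identRel hk u st acc m) (j, r)
        (m - 1, acc (stageVertex hk u (m - 1))))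
      (h : NFAAccepts (δ (stageVertex hk u j)) {r} q w) : CGSegRun j q w
  | fwd {j : ℕ} {q : Q} {w₁ w₂ : List Bool} (hj : j + 1 < m)
      (h₁ : NFAAccepts (δ (stageVertex hk u j)) {acc (stageVertex hk u j)} q w₁)
      (h₂ : CGSegRun (j + 1) (st (stageVertex hk u (j + 1))) w₂) :
      CGSegRun j q (w₁ ++ w₂)
  | bwd {j : ℕ} {q : Q} {w₁ w₂ : List Bool} (hj : j + 1 < m)
      (h₁ : NFAAccepts (δ (stageVertex hk u (j + 1)))
        {st (stageVertex hk u (j + 1))} q w₁)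
      (h₂ : CGSegRun j (acc (stageVertex hk u j)) w₂) :
      CGSegRun (j + 1) q (w₁ ++ w₂)

private lemma segrun_prepend {j : ℕ} {q q' : Q} {a : Bool} {w : List Bool}
    (hs : δ (stageVertex hk u j) q a q') (h : CGSegRun hk u st acc m δ j q' w) :
    CGSegRun hk u st acc m δ j q (a :: w) := by
  cases h with
  | fin hj hr h => exact .fin hj hr (.cons hs h)
  | fwd hj h₁ h₂ => exact .fwd hj (.cons hs h₁) h₂
  | bwd hj h₁ h₂ => exact .bwd hj (.cons hs h₁) h₂

private lemma segrun_transport (hSA : ∀ x : Fin n, st x ≠ acc x)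
    {j j₂ : ℕ} {q q₁ : Q} {w : List Bool}
    (hid : IdentGen (identRel hk u st acc m) (j, q) (j₂, q₁))
    (h : CGSegRun hk u st acc m δ j₂ q₁ w) : CGSegRun hk u st acc m δ j q w := by
  rcases ident_cases hk u st acc m hSA hid with he | hr | hr
  · have e1 : j = j₂ := congrArg Prod.fst he
    have e2 : q = q₁ := congrArg Prod.snd he
    subst e1; subst e2; exact h
  · rw [identRel_iff] at hr
    obtain ⟨e1, hlt, e2, e3⟩ := hr
    subst e1; subst e2; subst e3
    exact .fwd hlt (.nil rfl) h
  · rw [identRel_iff] at hr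
    obtain ⟨e1, hlt, e2, e3⟩ := hr
    subst e1; subst e2; subst e3
    exact .bwd hlt (.nil rfl) h

private lemma segrun_of_accept (hSA : ∀ x : Fin n, st x ≠ acc x)
    {p : ℕ × Q} {w : List Bool}
    (h : NFAAccepts (serialδ hk u st acc m δ)
      {p' : ℕ × Q | IdentGen (identRel hk u st acc m) p'
        (m - 1, acc (stageVertex hk u (m - 1)))} p w) :
    ∀ j q, j < m → IdentGen (identRel hk u st acc m) p (j, q) →
      CGSegRun hk u st acc m δ j q w := by
  induction h with
  | nil hp =>
    intro j q hj hpj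
    exact .fin hj (.trans (.symm hpj) hp) (.nil rfl)
  | cons hs hw ih =>
    intro j q hj hpj
    obtain ⟨j₂, q₁, q₂, hj₂, h1, h2, h3⟩ := hs
    have hseg := segrun_prepend hk u st acc m δ h2 (ih j₂ q₂ hj₂ (.symm h3))
    exact segrun_transport hk u st acc m δ hSA (.trans (.symm hpj) h1) hseg

inductive CGClean : ℕ → List Bool → Prop
  | nil : CGClean m []
  | cons {j : ℕ} {y w : List Bool} (hj : j < m)
      (h : NFAAccepts (δ (stageVertex hk u j)) {acc (stageVertex hk u j)}
        (st (stageVertex hk u j)) y)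
      (hw : CGClean (j + 1) w) : CGClean j (y ++ w)

private lemma segrun_count (hSA : ∀ x : Fin n, st x ≠ acc x)
    (hB : 0 < Nat.clog 2 n)
    (hlen : ∀ (x : Fin n) (w : List Bool),
      NFAAccepts (δ x) {acc x} (st x) w → w.length = Nat.clog 2 n)
    {j : ℕ} {q : Q} {w : List Bool} (h : CGSegRun hk u st acc m δ j q w) :
    (q = st (stageVertex hk u j) →
      Nat.clog 2 n * (m - j) ≤ w.length ∧
      (w.length = Nat.clog 2 n * (m - j) → CGClean hk u st acc m δ j w)) ∧
    (q = acc (stageVertex hk u j) →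
      Nat.clog 2 n * (m - 1 - j) ≤ w.length ∧
      (w.length = Nat.clog 2 n * (m - 1 - j) → CGClean hk u st acc m δ (j + 1) w)) := by
  induction h with
  | @fin j q r w hj hr h =>
    -- from hr : (j, r) ~ (m-1, acc (m-1)) deduce j = m - 1 and r = acc
    have hjr : j = m - 1 ∧ r = acc (stageVertex hk u (m - 1)) := by
      rcases ident_cases hk u st acc m hSA hr with he | hid | hid
      · exact ⟨congrArg Prod.fst he, congrArg Prod.snd he⟩
      · rw [identRel_iff] at hid
        exact absurd hid.2.2.2.symm (hSA _)
      · rw [identRel_iff] at hid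
        omega
    obtain ⟨hj1, hr1⟩ := hjr
    subst hj1
    constructor
    · intro hq
      subst hq; subst hr1
      have hlw : w.length = Nat.clog 2 n := hlen _ _ h
      have he1 : m - (m - 1) = 1 := by omega
      rw [he1, Nat.mul_one, hlw]
      refine ⟨le_refl _, fun _ => ?_⟩
      have : CGClean hk u st acc m δ (m - 1) (w ++ []) := by
        refine CGClean.cons hj h ?_
        have : m - 1 + 1 = m := by omega
        rw [this]
        exact CGClean.nil
      rwa [List.append_nil] at this
    · intro hq
      have he1 : m - 1 - (m - 1) = 0 := by omega
      rw [he1, Nat.mul_zero]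
      refine ⟨Nat.zero_le _, fun hw0 => ?_⟩
      have : w = [] := List.length_eq_zero_iff.mp hw0
      subst this
      have : m - 1 + 1 = m := by omega
      rw [this]
      exact CGClean.nil
  | @fwd j q w₁ w₂ hj h₁ h₂ ih =>
    obtain ⟨hlb₂, hcl₂⟩ := ih.1 rfl
    have hmul : Nat.clog 2 n * (m - j) = Nat.clog 2 n * (m - (j + 1)) + Nat.clog 2 n := by
      have : m - j = (m - (j + 1)) + 1 := by omega
      rw [this, Nat.mul_succ]
    constructor
    · intro hq
      subst hq
      have hlw₁ : w₁.length = Nat.clog 2 n := hlen _ _ h₁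
      rw [List.length_append, hlw₁, hmul]
      constructor
      · omega
      · intro heq
        exact CGClean.cons (by omega) h₁ (hcl₂ (by omega))
    · intro hq
      have hmul2 : m - 1 - j = m - (j + 1) := by omega
      rw [List.length_append, hmul2]
      constructor
      · omega
      · intro heq
        have hw₁ : w₁.length = 0 := by omega
        have : w₁ = [] := List.length_eq_zero_iff.mp hw₁
        subst this
        rw [List.nil_append]
        exact hcl₂ (by omega)
  | @bwd j q w₁ w₂ hj h₁ h₂ ih =>
    obtain ⟨hlb₂, hcl₂⟩ := ih.2 rfl
    have hmul2 : m - 1 - j = m - (j + 1) := by omega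
    rw [hmul2] at hlb₂ hcl₂
    constructor
    · intro hq
      rw [List.length_append]
      constructor
      · omega
      · intro heq
        have hw₁ : w₁.length = 0 := by omega
        have : w₁ = [] := List.length_eq_zero_iff.mp hw₁
        subst this
        rw [List.nil_append]
        exact hcl₂ (by omega)
    · intro hq
      have hmul3 : Nat.clog 2 n * (m - (j + 1)) =
          Nat.clog 2 n * (m - 1 - (j + 1)) + Nat.clog 2 n := by
        have : m - (j + 1) = (m - 1 - (j + 1)) + 1 := by omega
        rw [this, Nat.mul_succ]
      rw [List.length_append]
      rw [hmul3] at hlb₂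
      constructor
      · omega
      · intro heq
        omega

end CGAux

private def blockW {n : ℕ} (k k' : ℕ) (hk' : 0 < k') (v : Fin k' → Fin n) (t : ℕ) :
    List Bool :=
  binID n (v ⟨t / k % k', Nat.mod_lt _ hk'⟩)

private def bigW {n : ℕ} (k k' : ℕ) (hk' : 0 < k') (v : Fin k' → Fin n) (m j : ℕ) :
    List Bool :=
  ((List.range (m - j)).map fun i => blockW k k' hk' v (j + i)).flatten

private lemma bigW_succ {n k k' : ℕ} (hk' : 0 < k') (v : Fin k' → Fin n) {m j : ℕ}
    (hj : j < m) :
    bigW k k' hk' v m j = blockW k k' hk' v j ++ bigW k k' hk' v m (j + 1) := by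
  have hm : m - j = (m - (j + 1)) + 1 := by omega
  rw [bigW, hm, List.range_succ_eq_map, List.map_cons, List.flatten_cons, Nat.add_zero,
    List.map_map]
  congr 1
  rw [bigW]
  congr 1
  apply List.map_congr_left
  intro i _
  show blockW k k' hk' v (j + Nat.succ i) = blockW k k' hk' v (j + 1 + i)
  congr 1
  omega

private lemma bigW_nil {n k k' : ℕ} (hk' : 0 < k') (v : Fin k' → Fin n) {m j : ℕ}
    (hj : m ≤ j) : bigW k k' hk' v m j = [] := by
  rw [bigW, Nat.sub_eq_zero_of_le hj]
  rfl

private lemma blockW_length {n k k' : ℕ} (hk' : 0 < k') (v : Fin k' → Fin n) (t : ℕ) :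
    (blockW k k' hk' v t).length = Nat.clog 2 n := by
  rw [blockW, binID, List.length_ofFn]

private lemma bigW_length {n k k' : ℕ} (hk' : 0 < k') (v : Fin k' → Fin n) (m : ℕ) :
    ∀ d j, j + d = m → (bigW k k' hk' v m j).length = Nat.clog 2 n * d := by
  intro d
  induction d with
  | zero =>
    intro j hj
    rw [bigW_nil hk' v (by omega)]
    simp
  | succ d ih =>
    intro j hj
    rw [bigW_succ hk' v (by omega), List.length_append, blockW_length,
      ih (j + 1) (by omega), Nat.mul_succ]
    omega

private lemma binID_inj {n : ℕ} (hn : 2 ≤ n) {a b : Fin n}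
    (h : binID n a = binID n b) : a = b := by
  have hfun := List.ofFn_inj.mp h
  apply Fin.ext
  apply Nat.eq_of_testBit_eq
  intro i
  by_cases hi : i < Nat.clog 2 n
  · exact congrFun hfun ⟨i, hi⟩
  · have hle : n ≤ 2 ^ i :=
      le_trans (Nat.le_pow_clog one_lt_two n) (Nat.pow_le_pow_right (by norm_num) (by omega))
    rw [Nat.testBit_lt_two_pow (lt_of_lt_of_le a.isLt hle),
      Nat.testBit_lt_two_pow (lt_of_lt_of_le b.isLt hle)]

private lemma range_mul_flatten {α : Type*} (k : ℕ) (f : ℕ → List α) :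
    ∀ k' : ℕ, ((List.range (k * k')).map f).flatten =
      ((List.range k').map fun j =>
        ((List.range k).map fun i => f (j * k + i)).flatten).flatten := by
  intro k'
  induction k' with
  | zero => simp
  | succ k' ih =>
    have hm : k * (k' + 1) = k * k' + k := by ring
    rw [hm, List.range_add, List.map_append, List.flatten_append, ih,
      List.range_succ, List.map_append, List.flatten_append]
    congr 1
    simp only [List.map_cons, List.map_nil, List.flatten_cons, List.flatten_nil,
      List.append_nil, List.map_map]
    congr 1
    apply List.map_congr_left
    intro i _
    show f (k * k' + i) = f (k' * k + i)
    rw [Nat.mul_comm]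


private lemma W_eq {n k k' : ℕ} (hk : 0 < k) (hk' : 0 < k') (v : Fin k' → Fin n) :
    (List.ofFn fun j : Fin k' =>
      (List.replicate k (binID n (v j))).flatten).flatten =
      bigW k k' hk' v (k * k') 0 := by
  rw [bigW, Nat.sub_zero]
  have h0 : ((List.range (k * k')).map fun i => blockW k k' hk' v (0 + i)) =
      (List.range (k * k')).map fun i => blockW k k' hk' v i := by
    apply List.map_congr_left; intro a _; rw [Nat.zero_add]
  rw [h0, range_mul_flatten k _ k', ← (show (List.finRange k').map (fun i : Fin k' => (i : ℕ)) = List.range k' from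
      List.ext_getElem (by simp) (by simp)), List.map_map,
    List.ofFn_eq_map]
  congr 1
  apply List.map_congr_left
  intro j _
  show (List.replicate k (binID n (v j))).flatten =
    ((List.range k).map fun i => blockW k k' hk' v ((j : ℕ) * k + i)).flatten
  have hinner : ((List.range k).map fun i => blockW k k' hk' v ((j : ℕ) * k + i)) =
      (List.range k).map fun _ => binID n (v j) := by
    apply List.map_congr_left
    intro i hi
    rw [List.mem_range] at hi
    rw [blockW]
    congr 2
    apply Fin.ext
    show ((j : ℕ) * k + i) / k % k' = (j : ℕ)
    have e : (j : ℕ) * k + i = i + k * (j : ℕ) := by ring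
    rw [e, Nat.add_mul_div_left _ _ hk, Nat.div_eq_of_lt hi, Nat.zero_add,
      Nat.mod_eq_of_lt j.isLt]
  rw [hinner, List.map_const', List.length_range]


section CGMain

private lemma clean_edges {Q : Type*} {n k : ℕ} (hk : 0 < k) (u : Fin k → Fin n)
    (st acc : Fin n → Q) (m : ℕ) (δ : Fin n → Q → Bool → Q → Prop)
    (hn : 2 ≤ n) (E : Fin n → Fin n → Prop)
    (hlang : ∀ (x : Fin n) (w : List Bool),
      NFAAccepts (δ x) {acc x} (st x) w ↔ ∃ v0 : Fin n, E x v0 ∧ w = binID n v0)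
    {k' : ℕ} (hk' : 0 < k') (v : Fin k' → Fin n)
    {j : ℕ} {w : List Bool} (h : CGClean hk u st acc m δ j w) :
    w = bigW k k' hk' v m j →
      ∀ t, j ≤ t → t < m →
        E (stageVertex hk u t) (v ⟨t / k % k', Nat.mod_lt _ hk'⟩) := by
  induction h with
  | nil => intro _ t ht1 ht2; omega
  | @cons j y w hj hrun hw ih =>
    intro heq t ht1 ht2
    rw [bigW_succ hk' v hj] at heq
    obtain ⟨v', hEv', hy⟩ := (hlang _ _).mp hrun
    subst hy
    have hlen : (binID n v').length = (blockW k k' hk' v j).length := by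
      rw [blockW_length, binID, List.length_ofFn]
    obtain ⟨h1, h2⟩ := List.append_inj heq hlen
    rcases Nat.eq_or_lt_of_le ht1 with rfl | hlt
    · have h1' : binID n v' = binID n (v ⟨j / k % k', Nat.mod_lt _ hk'⟩) := h1
      have hv : v' = v ⟨j / k % k', Nat.mod_lt _ hk'⟩ := binID_inj hn h1'
      exact hv ▸ hEv'
    · exact ih h2 t (by omega) ht2

private lemma accept_bigW {Q : Type*} {n k : ℕ} (hk : 0 < k) (u : Fin k → Fin n)
    (st acc : Fin n → Q) (m : ℕ) (δ : Fin n → Q → Bool → Q → Prop)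
    {k' : ℕ} (hk' : 0 < k') (v : Fin k' → Fin n)
    (hrun : ∀ t, t < m → NFAAccepts (δ (stageVertex hk u t))
      {acc (stageVertex hk u t)} (st (stageVertex hk u t)) (blockW k k' hk' v t)) :
    ∀ d j, j + d + 1 = m →
      ∀ p, IdentGen (identRel hk u st acc m) p (j, st (stageVertex hk u j)) →
      NFAAccepts (serialδ hk u st acc m δ)
        {p' : ℕ × Q | IdentGen (identRel hk u st acc m) p'
          (m - 1, acc (stageVertex hk u (m - 1)))}
        p (bigW k k' hk' v m j) := by
  intro d
  induction d with
  | zero =>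
    intro j hjm p hp
    have hjm1 : j = m - 1 := by omega
    subst hjm1
    rw [bigW_succ hk' v (by omega), bigW_nil hk' v (by omega), List.append_nil]
    exact lift_run hk u st acc m δ (by omega) (hrun (m - 1) (by omega)) p hp
  | succ d ih =>
    intro j hjm p hp
    rw [bigW_succ hk' v (by omega)]
    refine nfa_compose
      (lift_run hk u st acc m δ (show j < m by omega) (hrun j (by omega)) p hp) ?_
    intro p' hp'
    refine ih (j + 1) (by omega) p' (.trans hp' (.rel ?_))
    exact show identRel hk u st acc m (j, acc (stageVertex hk u j))
        (j + 1, st (stageVertex hk u (j + 1))) from ⟨rfl, by omega, rfl, rfl⟩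

end CGMain


/-- Let `G` be an undirected simple graph on `V = {0, …, n-1}`, `n ≥ 2`,
`B := ⌈log₂ n⌉`, and `ID(v)` the `B`-bit binary representation of `v`. Suppose for
each `u ∈ V` that `N(u)` is an NFA over `{0,1}` (with state space `Q`, transitions
`δ u`, single start state `st u` and single accepting state `acc u`) accepting exactly
the language `{ID(v) : {u,v} ∈ E}`. For `u₁, …, u_k ∈ V` (`k ≥ 1`) and `k' ≥ 1`, let
`CG(u₁, …, u_k)` be the serial connection of `N(u₁), …, N(u_k)` repeated `k'` times,
formed by identifying the accepting state of each NFA in the sequence with the start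
state of the next; its start state is the start state of the first NFA, and its unique
accepting state is (the class of) the accepting state of the last NFA. Then for all
`v₁, …, v_{k'} ∈ V`: `CG(u₁, …, u_k)` accepts `ID(v₁)^k ID(v₂)^k ⋯ ID(v_{k'})^k`
iff `{u_i, v_j} ∈ E` for every `1 ≤ i ≤ k` and `1 ≤ j ≤ k'`. -/
theorem clique_gadget_acceptance {Q : Type*} (n : ℕ) (hn : 2 ≤ n)
    (E : Fin n → Fin n → Prop) (hsymm : ∀ u v, E u v → E v u)
    (δ : Fin n → Q → Bool → Q → Prop) (st acc : Fin n → Q)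
    (hlang : ∀ (u : Fin n) (w : List Bool),
      NFAAccepts (δ u) {acc u} (st u) w ↔ ∃ v : Fin n, E u v ∧ w = binID n v)
    (k k' : ℕ) (hk : 0 < k) (hk' : 1 ≤ k')
    (u : Fin k → Fin n) (v : Fin k' → Fin n) :
    NFAAccepts (serialδ hk u st acc (k * k') δ)
        {p : ℕ × Q | IdentGen (identRel hk u st acc (k * k')) p
          (k * k' - 1, acc (stageVertex hk u (k * k' - 1)))}
        (0, st (stageVertex hk u 0))
        ((List.ofFn fun j : Fin k' =>
          (List.replicate k (binID n (v j))).flatten).flatten) ↔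
      ∀ (i : Fin k) (j : Fin k'), E (u i) (v j) := by
  have hB : 0 < Nat.clog 2 n := Nat.clog_pos one_lt_two hn
  have hSA : ∀ x : Fin n, st x ≠ acc x := by
    intro x hx
    obtain ⟨v0, _, hv0⟩ := (hlang x []).mp (.nil hx)
    have hl : (binID n v0).length = 0 := by rw [← hv0]; rfl
    rw [binID, List.length_ofFn] at hl
    omega
  have hm : 0 < k * k' := Nat.mul_pos hk hk'
  have hlen : ∀ (x : Fin n) (w : List Bool),
      NFAAccepts (δ x) {acc x} (st x) w → w.length = Nat.clog 2 n := by
    intro x w hw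
    obtain ⟨v0, _, rfl⟩ := (hlang x w).mp hw
    rw [binID, List.length_ofFn]
  constructor
  · intro h
    have hseg := segrun_of_accept hk u st acc (k * k') δ hSA h 0
      (st (stageVertex hk u 0)) hm (.refl _)
    have hcnt := (segrun_count hk u st acc (k * k') δ hSA hB hlen hseg).1 rfl
    have hWlen : ((List.ofFn fun j : Fin k' =>
        (List.replicate k (binID n (v j))).flatten).flatten).length =
        Nat.clog 2 n * (k * k' - 0) := by
      rw [Nat.sub_zero, W_eq hk hk' v,
        bigW_length hk' v (k * k') (k * k') 0 (Nat.zero_add _)]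
    have hclean := hcnt.2 hWlen
    have hed := clean_edges hk u st acc (k * k') δ hn E hlang hk' v hclean
      (W_eq hk hk' v)
    intro i j
    have hb1 : (j : ℕ) * k + (i : ℕ) < ((j : ℕ) + 1) * k := by
      rw [Nat.add_mul, Nat.one_mul]
      exact Nat.add_lt_add_left i.isLt _
    have hb2 : ((j : ℕ) + 1) * k ≤ k' * k := Nat.mul_le_mul_right k j.isLt
    have hb : (j : ℕ) * k + (i : ℕ) < k * k' :=
      lt_of_lt_of_le hb1 (le_of_le_of_eq hb2 (Nat.mul_comm k' k))
    have hthis := hed ((j : ℕ) * k + (i : ℕ)) (Nat.zero_le _) hb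
    have e1 : stageVertex hk u ((j : ℕ) * k + (i : ℕ)) = u i := by
      rw [stageVertex]
      congr 1
      apply Fin.ext
      show ((j : ℕ) * k + (i : ℕ)) % k = (i : ℕ)
      have e : (j : ℕ) * k + (i : ℕ) = (i : ℕ) + (j : ℕ) * k := by ring
      rw [e, Nat.add_mul_mod_self_right]
      exact Nat.mod_eq_of_lt i.isLt
    have e2 : (⟨((j : ℕ) * k + (i : ℕ)) / k % k', Nat.mod_lt _ hk'⟩ : Fin k') = j := by
      apply Fin.ext
      show ((j : ℕ) * k + (i : ℕ)) / k % k' = (j : ℕ)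
      have e : (j : ℕ) * k + (i : ℕ) = (i : ℕ) + k * (j : ℕ) := by ring
      rw [e, Nat.add_mul_div_left _ _ hk, Nat.div_eq_of_lt i.isLt, Nat.zero_add,
        Nat.mod_eq_of_lt j.isLt]
    rw [e1, e2] at hthis
    exact hthis
  · intro hE
    have hrun : ∀ t, t < k * k' → NFAAccepts (δ (stageVertex hk u t))
        {acc (stageVertex hk u t)} (st (stageVertex hk u t))
        (blockW k k' hk' v t) := by
      intro t ht
      exact (hlang _ _).mpr ⟨v ⟨t / k % k', Nat.mod_lt _ hk'⟩,
        hE ⟨t % k, Nat.mod_lt t hk⟩ ⟨t / k % k', Nat.mod_lt _ hk'⟩, rfl⟩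
    rw [W_eq hk hk' v]
    exact accept_bigW hk u st acc (k * k') δ hk' v hrun (k * k' - 1) 0 (by omega)
      (0, st (stageVertex hk u 0)) (.refl _)
end
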